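/- arXiv:2309.09383 — 2 statements merged into one kernel-verified Lean document; each statement's English description precedes it below -/
import Mathlib

section
/- Let n ∈ ℕ with n ≥ k, and let N = b^n. Then the Lebesgue measure of the set of θ ∈ ℝ/ℤ such that |μ̂_n(θ)| ≥ 1 − (1/4)b^{−3k²} is at most 2b^{k²} N^{−k}. -/
open scoped BigOperators

/-- The Fourier transform `μ̂_n(θ)` of the probability measure `μ_n` on `ℤ` which places
mass `2^{-n}` on each number `(∑_{i<n} x_i b^i)^k` with all digits `x_i ∈ {d₁, d₂}`. -/
noncomputable def muHat (b k d₁ d₂ n : ℕ) (θ : ℝ) : ℂ :=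
  (2 ^ n : ℂ)⁻¹ * ∑ x : Fin n → Bool,
    Complex.exp (2 * Real.pi * Complex.I *
      ((((∑ i : Fin n, (if x i then d₂ else d₁) * b ^ (i : ℕ)) ^ k : ℕ) : ℝ) * θ))

open Finset Real


lemma trig_bound (v : ℝ) : 8 * (v - round v)^2 ≤ 1 - Real.cos (2 * π * v) := by
  set w := v - (round v : ℝ) with hw
  have h1 : |w| ≤ 1/2 := abs_sub_round v
  obtain ⟨h1a, h1b⟩ := abs_le.mp h1
  have hcos : Real.cos (2*π*v) = Real.cos (2*π*w) := by
    have h : 2*π*v = 2*π*w + (round v : ℤ) * (2*π) := by push_cast [hw]; ring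
    rw [h, Real.cos_add_int_mul_two_pi]
  have h2 : Real.cos (2*π*w) = 2 * Real.cos (π*w)^2 - 1 := by
    have := Real.cos_two_mul (π*w); rw [← this]; ring_nf
  have hsc := Real.sin_sq_add_cos_sq (π*w)
  have hπ := Real.pi_pos
  have hsin : 2 * |w| ≤ |Real.sin (π * w)| := by
    have hn : (0:ℝ) ≤ π * |w| := by positivity
    have hu : π * |w| ≤ π / 2 := by nlinarith [abs_nonneg w]
    have hms := Real.mul_le_sin hn hu
    have heq : |Real.sin (π * w)| = Real.sin (π * |w|) := by
      rcases le_or_gt 0 w with h | h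
      · rw [abs_of_nonneg h]
        exact abs_of_nonneg (Real.sin_nonneg_of_nonneg_of_le_pi (by positivity) (by nlinarith))
      · rw [abs_of_neg h, show π * -w = -(π * w) by ring, Real.sin_neg]
        have : Real.sin (-(π * w)) ≥ 0 :=
          Real.sin_nonneg_of_nonneg_of_le_pi (by nlinarith) (by nlinarith)
        rw [Real.sin_neg] at this
        rw [abs_of_nonpos (by linarith)]
    rw [heq]
    calc 2 * |w| = 2/π * (π * |w|) := by field_simp
    _ ≤ _ := hms
  rw [hcos, h2]
  nlinarith [sq_abs w, sq_abs (Real.sin (π*w)), abs_nonneg w, abs_nonneg (Real.sin (π*w))]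


lemma findiff {ι : Type*} [DecidableEq ι] (h : ι → ℝ) (J : Finset ι) :
    ∀ (m : ℕ) (A : ℝ),
      (m < J.card → ∑ v ∈ J.powerset, (-1:ℝ)^v.card * (A + ∑ j ∈ v, h j)^m = 0) ∧
      (m = J.card → ∑ v ∈ J.powerset, (-1:ℝ)^v.card * (A + ∑ j ∈ v, h j)^m
          = (-1)^m * m.factorial * ∏ j ∈ J, h j) := by
  induction J using Finset.induction_on with
  | empty =>
    intro m A
    refine ⟨fun hm => by simp at hm, fun hm => by subst hm; simp⟩
  | @insert a J ha ih =>
    intro m A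
    have hrec : ∀ (m' : ℕ) (A' : ℝ),
        ∑ v ∈ (insert a J).powerset, (-1:ℝ)^v.card * (A' + ∑ j ∈ v, h j)^m'
          = (∑ v ∈ J.powerset, (-1:ℝ)^v.card * (A' + ∑ j ∈ v, h j)^m')
            - ∑ v ∈ J.powerset, (-1:ℝ)^v.card * ((A' + h a) + ∑ j ∈ v, h j)^m' := by
      intro m' A'
      rw [Finset.sum_powerset_insert ha]
      have : ∀ v ∈ J.powerset, (-1:ℝ)^(insert a v).card * (A' + ∑ j ∈ insert a v, h j)^m'
          = -((-1:ℝ)^v.card * ((A' + h a) + ∑ j ∈ v, h j)^m') := by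
        intro v hv
        have hav : a ∉ v := fun hc => ha (Finset.mem_powerset.mp hv hc)
        rw [Finset.card_insert_of_notMem hav, Finset.sum_insert hav]
        ring_nf
      rw [Finset.sum_congr rfl this, Finset.sum_neg_distrib]
      ring
    have hexp : ∀ (m' : ℕ) (A' : ℝ),
        ∑ v ∈ J.powerset, (-1:ℝ)^v.card * ((A' + h a) + ∑ j ∈ v, h j)^m'
          = ∑ i ∈ Finset.range (m'+1), (h a)^(m'-i) * (m'.choose i) *
              ∑ v ∈ J.powerset, (-1:ℝ)^v.card * (A' + ∑ j ∈ v, h j)^i := by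
      intro m' A'
      have : ∀ v ∈ J.powerset, (-1:ℝ)^v.card * ((A' + h a) + ∑ j ∈ v, h j)^m'
          = ∑ i ∈ Finset.range (m'+1),
              (h a)^(m'-i) * (m'.choose i) * ((-1:ℝ)^v.card * (A' + ∑ j ∈ v, h j)^i) := by
        intro v hv
        rw [show (A' + h a) + ∑ j ∈ v, h j = (A' + ∑ j ∈ v, h j) + h a by ring, add_pow]
        rw [Finset.mul_sum]
        exact Finset.sum_congr rfl (fun i _ => by ring)
      rw [Finset.sum_congr rfl this, Finset.sum_comm]
      exact Finset.sum_congr rfl (fun i _ => by rw [← Finset.mul_sum])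
    have hcard : (insert a J).card = J.card + 1 := Finset.card_insert_of_notMem ha
    constructor
    · intro hm
      rw [hrec, hexp]
      have hz : ∀ i ∈ Finset.range (m+1), (h a)^(m-i) * ((m.choose i):ℝ) *
          (∑ v ∈ J.powerset, (-1:ℝ)^v.card * (A + ∑ j ∈ v, h j)^i)
          = (if i = m then (h a)^(m-i) * ((m.choose i):ℝ) * ∑ v ∈ J.powerset, (-1:ℝ)^v.card * (A + ∑ j ∈ v, h j)^i else 0) := by
        intro i hi
        rcases eq_or_ne i m with rfl | hne
        · simp
        · have hi' : i < m := lt_of_le_of_ne (Nat.lt_succ_iff.mp (Finset.mem_range.mp hi)) hne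
          have hic : i < J.card := by omega
          rw [(ih i A).1 hic, if_neg hne]
          ring
      rw [Finset.sum_congr rfl hz, Finset.sum_ite_eq' (Finset.range (m+1)) m]
      simp
    · intro hm
      rw [hrec, hexp]
      have hm' : m = J.card + 1 := by omega
      rw [Finset.sum_range_succ]
      have hz : ∀ i ∈ Finset.range m, (h a)^(m-i) * ((m.choose i):ℝ) *
          (∑ v ∈ J.powerset, (-1:ℝ)^v.card * (A + ∑ j ∈ v, h j)^i)
          = (if i = J.card then (h a)^(m-i) * ((m.choose i):ℝ) * ∑ v ∈ J.powerset, (-1:ℝ)^v.card * (A + ∑ j ∈ v, h j)^i else 0) := by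
        intro i hi
        rcases eq_or_ne i J.card with rfl | hne
        · simp
        · have hic : i < J.card := by
            have := Finset.mem_range.mp hi; omega
          rw [(ih i A).1 hic, if_neg hne]
          ring
      rw [Finset.sum_congr rfl hz, Finset.sum_ite_eq' (Finset.range m) J.card]
      have hJm : J.card ∈ Finset.range m := Finset.mem_range.mpr (by omega)
      rw [if_pos hJm, (ih J.card A).2 rfl]
      rw [Finset.prod_insert ha]
      have h1 : m - J.card = 1 := by omega
      have h2 : m.choose J.card = m := by
        rw [hm']; exact Nat.choose_succ_self_right J.card
      have h3 : (m.factorial : ℝ) = m * J.card.factorial := by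
        rw [hm', Nat.factorial_succ]; push_cast; ring
      have h4 : ((m.choose m):ℝ) = 1 := by simp
      have h5 : (-1:ℝ)^m = -(-1:ℝ)^J.card := by
        rw [hm', pow_succ]; ring
      rw [h1, h2, h4, h3, h5, pow_one, Nat.sub_self, pow_zero]
      ring


lemma closed_up (c : ℕ) : ∀ (J : Finset ℕ) (m : ℕ), J.card = c → (∀ j ∈ J, j < m) →
    (∀ j ∈ J, j+1 ∈ J ∨ j+1 = m) → J = Finset.Ico (m - c) m := by
  induction c with
  | zero =>
    intro J m hc _ _
    rw [Finset.card_eq_zero] at hc; subst hc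
    rw [Nat.sub_zero, Finset.Ico_self]
  | succ c ih =>
    intro J m hc hlt hcl
    have hne : J.Nonempty := Finset.card_pos.mp (by omega)
    have hM : J.max' hne ∈ J := J.max'_mem hne
    set M := J.max' hne with hMdef
    have hMm : M < m := hlt _ hM
    have hMeq : M + 1 = m := by
      rcases hcl M hM with h | h
      · exact absurd (J.le_max' _ h) (by omega)
      · exact h
    have hcard' : (J.erase M).card = c := by
      rw [Finset.card_erase_of_mem hM]; omega
    have hlt' : ∀ j ∈ J.erase M, j < m - 1 := by
      intro j hj
      have h1 : j ∈ J := Finset.mem_of_mem_erase hj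
      have h2 : j ≠ M := Finset.ne_of_mem_erase hj
      have := J.le_max' j h1
      omega
    have hcl' : ∀ j ∈ J.erase M, j + 1 ∈ J.erase M ∨ j + 1 = m - 1 := by
      intro j hj
      have h1 : j ∈ J := Finset.mem_of_mem_erase hj
      rcases hcl j h1 with h | h
      · rcases eq_or_ne (j+1) M with h2 | h2
        · right; omega
        · left; exact Finset.mem_erase.mpr ⟨h2, h⟩
      · exfalso; have := hlt' j hj; omega
    have hIH := ih (J.erase M) (m-1) hcard' hlt' hcl'
    have : J = insert M (J.erase M) := (Finset.insert_erase hM).symm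
    rw [this, hIH]
    have h1 : m - 1 - c = m - (c+1) := by omega
    have h2 : M = m - 1 := by omega
    rw [h1, h2]
    have h3 : m - (c+1) ≤ m - 1 := by omega
    rw [Finset.Ico_insert_right h3]
    rw [← Finset.Ico_add_one_right_eq_Icc]
    congr 1
    omega

lemma sum_Ico_top (nn kk : ℕ) (h : kk ≤ nn) :
    ∑ j ∈ Finset.Ico (nn - kk) nn, j = (∑ j ∈ Finset.range kk, j) + kk * (nn - kk) := by
  rw [Finset.sum_Ico_eq_sum_range]
  have h1 : nn - (nn - kk) = kk := by omega
  rw [h1, Finset.sum_add_distrib, Finset.sum_const, smul_eq_mul, Finset.card_range,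
    Nat.mul_comm]
  exact Nat.add_comm _ _

lemma exists_subset_sum (nn kk : ℕ) (hkn : kk ≤ nn) :
    ∀ t ≤ kk * (nn - kk), ∃ J : Finset ℕ, (∀ j ∈ J, j < nn) ∧ J.card = kk ∧
      ∑ j ∈ J, j = (∑ j ∈ Finset.range kk, j) + t := by
  intro t
  induction t with
  | zero =>
    intro _
    exact ⟨Finset.range kk, fun j hj => lt_of_lt_of_le (Finset.mem_range.mp hj) hkn,
      Finset.card_range kk, by simp⟩
  | succ t iht =>
    intro ht
    obtain ⟨J, hlt, hcard, hsum⟩ := iht (by omega)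
    by_cases hstep : ∃ j ∈ J, j + 1 ∉ J ∧ j + 1 < nn
    · obtain ⟨j, hj, hj1, hj2⟩ := hstep
      refine ⟨insert (j+1) (J.erase j), ?_, ?_, ?_⟩
      · intro i hi
        rcases Finset.mem_insert.mp hi with rfl | hi'
        · exact hj2
        · exact hlt _ (Finset.mem_of_mem_erase hi')
      · rw [Finset.card_insert_of_notMem (fun hc => hj1 (Finset.mem_of_mem_erase hc)),
          Finset.card_erase_of_mem hj]
        have hpos : 0 < J.card := Finset.card_pos.mpr ⟨j, hj⟩
        omega
      · rw [Finset.sum_insert (fun hc => hj1 (Finset.mem_of_mem_erase hc))]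
        have h5 : ∑ x ∈ J.erase j, x + j = ∑ x ∈ J, x := Finset.sum_erase_add J (fun x => x) hj
        omega
    · exfalso
      push_neg at hstep
      have hcl : ∀ j ∈ J, j + 1 ∈ J ∨ j + 1 = nn := by
        intro j hj
        by_cases h : j + 1 ∈ J
        · exact Or.inl h
        · right
          have h2 := hstep j hj h
          have h3 := hlt j hj
          omega
      have := closed_up kk J nn hcard hlt hcl
      subst this
      rw [sum_Ico_top nn kk hkn] at hsum
      omega


lemma descent (b : ℕ) (hb : 3 ≤ b) (K : ℕ) (θ η : ℝ) (hη : 0 ≤ η)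
    (hsmall : ((b:ℝ)+1) * η < 1) (s₀ s₁ : ℕ) (hs : s₀ ≤ s₁)
    (H : ∀ s, s₀ ≤ s → s ≤ s₁ → ∃ P : ℤ, |(K:ℝ) * (b:ℝ)^s * θ - P| ≤ η) :
    ∃ P : ℤ, |(K:ℝ) * (b:ℝ)^s₀ * θ - P| ≤ η / (b:ℝ)^(s₁ - s₀) := by
  have hb1 : (1:ℝ) ≤ (b:ℝ) := Nat.one_le_cast.mpr (by omega)
  have hbpos : (0:ℝ) < b := by linarith
  have key : ∀ j : ℕ, ∀ s : ℕ, s₀ ≤ s → s + j ≤ s₁ →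
      ∃ P : ℤ, |(K:ℝ) * (b:ℝ)^s * θ - P| ≤ η / (b:ℝ)^j := by
    intro j
    induction j with
    | zero => intro s h1 h2; simpa using H s h1 (by omega)
    | succ j ihj =>
      intro s h1 h2
      obtain ⟨P', hP'⟩ := ihj (s+1) (by omega) (by omega)
      obtain ⟨P, hP⟩ := H s h1 (by omega)
      set x := (K:ℝ) * (b:ℝ)^s * θ with hx
      have hbj : (1:ℝ) ≤ (b:ℝ)^j := one_le_pow₀ hb1
      have hrel : (K:ℝ) * (b:ℝ)^(s+1) * θ = (b:ℝ) * x := by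
        rw [hx, pow_succ]; ring
      rw [hrel] at hP'
      have h3 : |(b:ℝ) * x - (b:ℝ)*P| ≤ (b:ℝ) * η := by
        rw [← mul_sub, abs_mul, abs_of_pos hbpos]
        exact mul_le_mul_of_nonneg_left hP hbpos.le
      have h4 : η / (b:ℝ)^j ≤ η := by
        rw [div_le_iff₀ (by positivity)]
        nlinarith
      have hd : |(b:ℝ) * P - P'| < 1 := by
        calc |(b:ℝ) * P - P'| = |((b:ℝ)*x - P') - ((b:ℝ)*x - (b:ℝ)*P)| := by ring_nf
        _ ≤ |(b:ℝ)*x - P'| + |(b:ℝ)*x - (b:ℝ)*P| := abs_sub _ _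
        _ ≤ η / (b:ℝ)^j + (b:ℝ) * η := add_le_add hP' h3
        _ < 1 := by nlinarith
      have h5 : |((b:ℤ)*P - P')| < 1 := by
        have hcast : (b:ℝ) * P - P' = (((b:ℤ)*P - P' : ℤ) : ℝ) := by push_cast; ring
        rw [hcast, ← Int.cast_abs] at hd
        exact_mod_cast hd
      have hint : (b:ℤ) * P = P' := by
        rcases abs_lt.mp h5 with ⟨ha, hb'⟩; omega
      refine ⟨P, ?_⟩
      have heq : (b:ℝ) * x - P' = (b:ℝ) * (x - P) := by
        have : ((P' : ℝ)) = (b:ℝ) * P := by exact_mod_cast congrArg (fun z : ℤ => (z:ℝ)) hint.symm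
        rw [this]; ring
      rw [heq, abs_mul, abs_of_pos hbpos] at hP'
      have hfin : |x - P| ≤ η / ((b:ℝ)^j * b) := by
        rw [le_div_iff₀ (by positivity)]
        have h6 := (le_div_iff₀ (show (0:ℝ) < (b:ℝ)^j from by positivity)).mp hP'
        nlinarith [abs_nonneg (x - P)]
      rw [← pow_succ] at hfin
      exact hfin
  exact key (s₁ - s₀) s₀ le_rfl (by omega)


lemma eta_bounds (k b : ℕ) (hk : 2 ≤ k) (hb : 3 ≤ b) :
    (0:ℝ) ≤ 2^k * Real.sqrt ((1/4) * ((b:ℝ)^(3*k^2))⁻¹ * 2^k/8) ∧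
    2^k * Real.sqrt ((1/4) * ((b:ℝ)^(3*k^2))⁻¹ * 2^k/8) ≤ 1/2 ∧
    ((b:ℝ)+1) * (2^k * Real.sqrt ((1/4) * ((b:ℝ)^(3*k^2))⁻¹ * 2^k/8)) < 1 := by
  have hb1 : (1:ℝ) ≤ (b:ℝ) := by
    have h : (1:ℕ) ≤ b := by omega
    exact_mod_cast h
  have hb3 : (3:ℝ) ≤ (b:ℝ) := by exact_mod_cast hb
  have hbp : (0:ℝ) < (b:ℝ)^(3*k^2) := by positivity
  set ε : ℝ := (1/4) * ((b:ℝ)^(3*k^2))⁻¹ with hε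
  have hεpos : 0 < ε := by positivity
  set D : ℝ := ε * 2^k/8 with hD
  have hDpos : 0 < D := by positivity
  set η : ℝ := 2^k * Real.sqrt D with hηdef
  have hηpos : 0 ≤ η := by positivity
  have hη2 : η^2 = 8^k * ε / 8 := by
    rw [hηdef, mul_pow, Real.sq_sqrt hDpos.le, hD]
    have : ((2:ℝ)^k)^2 * 2^k = 8^k := by
      rw [← pow_mul, ← pow_add, show (8:ℝ) = 2^3 by norm_num, ← pow_mul]
      congr 1; ring
    calc ((2:ℝ)^k)^2 * (ε*2^k/8) = (((2:ℝ)^k)^2*2^k)*ε/8 := by ring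
      _ = 8^k*ε/8 := by rw [this]
  have h8b : (8:ℝ)^k ≤ (b:ℝ)^(3*k^2) := by
    calc (8:ℝ)^k ≤ ((b:ℝ)^3)^k := by
          apply pow_le_pow_left₀ (by norm_num)
          have h33 : (3:ℝ)^3 ≤ (b:ℝ)^3 := pow_le_pow_left₀ (by norm_num) hb3 3
          norm_num at h33; linarith
      _ = (b:ℝ)^(3*k) := by rw [← pow_mul]
      _ ≤ (b:ℝ)^(3*k^2) := by
          apply pow_le_pow_right₀ hb1
          nlinarith
  have hsq2 : η^2 ≤ (1/2)^2 := by
    rw [hη2, hε]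
    rw [div_le_iff₀ (by norm_num : (0:ℝ) < 8)]
    calc (8:ℝ)^k * ((1/4) * ((b:ℝ)^(3*k^2))⁻¹) = (8:ℝ)^k / (b:ℝ)^(3*k^2) / 4 := by ring
      _ ≤ 1/4 := by
          have h9 : (8:ℝ)^k/(b:ℝ)^(3*k^2) ≤ 1 := div_le_one_of_le₀ h8b (by positivity)
          linarith
      _ ≤ (1/2)^2*8 := by norm_num
  have hle : η ≤ 1/2 := by
    have := Real.sqrt_le_sqrt hsq2
    rwa [Real.sqrt_sq hηpos, Real.sqrt_sq (by norm_num)] at this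
  refine ⟨hηpos, hle, ?_⟩
  have hsq3 : (((b:ℝ)+1) * η)^2 < 1 := by
    have hb2 : ((b:ℝ)+1)^2 ≤ 4*(b:ℝ)^2 := by nlinarith
    have h1 : (((b:ℝ)+1) * η)^2 = ((b:ℝ)+1)^2 * η^2 := by ring
    rw [h1, hη2, hε]
    have h2 : ((b:ℝ)+1)^2 * (8^k * ((1/4) * ((b:ℝ)^(3*k^2))⁻¹) / 8) ≤ 4*(b:ℝ)^2 * (8^k * ((1/4) * ((b:ℝ)^(3*k^2))⁻¹) / 8) := by
      apply mul_le_mul_of_nonneg_right hb2 (by positivity)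
    have h3 : (b:ℝ)^2 * (8:ℝ)^k ≤ (b:ℝ)^(3*k^2) := by
      calc (b:ℝ)^2 * (8:ℝ)^k ≤ (b:ℝ)^2 * ((b:ℝ)^3)^k := by
            apply mul_le_mul_of_nonneg_left _ (by positivity)
            apply pow_le_pow_left₀ (by norm_num)
            have h33 : (3:ℝ)^3 ≤ (b:ℝ)^3 := pow_le_pow_left₀ (by norm_num) hb3 3
            norm_num at h33; linarith
        _ = (b:ℝ)^(2 + 3*k) := by rw [← pow_mul, ← pow_add]
        _ ≤ (b:ℝ)^(3*k^2) := by apply pow_le_pow_right₀ hb1; nlinarith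
    calc ((b:ℝ)+1)^2 * (8^k * ((1/4) * ((b:ℝ)^(3*k^2))⁻¹) / 8) ≤ 4*(b:ℝ)^2 * (8^k * ((1/4) * ((b:ℝ)^(3*k^2))⁻¹) / 8) := h2
      _ = ((b:ℝ)^2 * 8^k) / (b:ℝ)^(3*k^2) / 8 := by ring
      _ ≤ 1/8 := by
          have h9 : (b:ℝ)^2*(8:ℝ)^k/(b:ℝ)^(3*k^2) ≤ 1 := div_le_one_of_le₀ h3 (by positivity)
          linarith
      _ < 1 := by norm_num
  nlinarith [mul_nonneg (by linarith : (0:ℝ) ≤ (b:ℝ)+1) hηpos]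

lemma sum_attachFin (s : Finset ℕ) {n : ℕ} (h : ∀ m ∈ s, m < n) :
    ∑ i ∈ s.attachFin h, (i:ℕ) = ∑ j ∈ s, j := by
  apply Finset.sum_bij (i := fun (a : Fin n) _ => (a:ℕ))
  · intro a ha; exact (Finset.mem_attachFin h).mp ha
  · intro a₁ h₁ a₂ h₂ heq; exact Fin.ext heq
  · intro j hj; exact ⟨⟨j, h j hj⟩, (Finset.mem_attachFin h).mpr hj, rfl⟩
  · intro a ha; rfl

def dval (b d₁ d₂ n : ℕ) (x : Fin n → Bool) : ℕ :=
  ∑ i : Fin n, (if x i then d₂ else d₁) * b ^ (i : ℕ)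


lemma step1 (k b d₁ d₂ n : ℕ) (hk : 2 ≤ k) (hb : 3 ≤ b) (θ : ℝ)
    (hμ : 1 - (1/4) * ((b:ℝ)^(3*k^2))⁻¹ ≤ ‖muHat b k d₁ d₂ n θ‖) :
    ∃ φ : ℝ, ∑ x : Fin n → Bool,
      ((((dval b d₁ d₂ n x)^k : ℕ):ℝ) * θ - φ
        - round ((((dval b d₁ d₂ n x)^k : ℕ):ℝ) * θ - φ))^2
      ≤ (1/4) * ((b:ℝ)^(3*k^2))⁻¹ * 2^n / 8 := by
  set ε : ℝ := (1/4) * ((b:ℝ)^(3*k^2))⁻¹ with hε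
  have hbp : (0:ℝ) < (b:ℝ)^(3*k^2) := by
    have h : (0:ℕ) < b := by omega
    have : (0:ℝ) < (b:ℝ) := by exact_mod_cast h
    positivity
  have hε1 : ε ≤ 1/4 := by
    rw [hε]
    have h1 : ((b:ℝ)^(3*k^2))⁻¹ ≤ 1 := by
      rw [inv_le_one_iff₀]
      right
      apply one_le_pow₀
      have : (1:ℕ) ≤ b := by omega
      exact_mod_cast this
    nlinarith
  set u : (Fin n → Bool) → ℝ := fun x =>
    ((((dval b d₁ d₂ n x)^k : ℕ):ℝ) * θ) with hu
  set S : ℂ := ∑ x : Fin n → Bool, Complex.exp (↑(2 * Real.pi * u x) * Complex.I) with hS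
  have hmu : muHat b k d₁ d₂ n θ = (2^n : ℂ)⁻¹ * S := by
    rw [muHat, hS]
    congr 1
    apply Finset.sum_congr rfl
    intro x _
    congr 1
    simp only [hu, dval]
    push_cast
    ring
  have habs : ‖muHat b k d₁ d₂ n θ‖ = (2^n : ℝ)⁻¹ * ‖S‖ := by
    rw [hmu, norm_mul, norm_inv, norm_pow]
    norm_num
  have h2n : (0:ℝ) < 2^n := by positivity
  have hSabs : (1 - ε) * 2^n ≤ ‖S‖ := by
    rw [habs] at hμ
    rw [sub_mul, one_mul]
    have := mul_le_mul_of_nonneg_right hμ h2n.le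
    rw [mul_comm ((2^n:ℝ)⁻¹) ‖S‖, mul_assoc, inv_mul_cancel₀ h2n.ne', mul_one] at this
    linarith [this]
  have hSne : S ≠ 0 := by
    intro hc
    rw [hc] at hSabs
    simp at hSabs
    nlinarith
  set ψ := Complex.arg S with hψ
  have hsum : ∑ x : Fin n → Bool, Real.cos (2 * Real.pi * u x - ψ) = ‖S‖ := by
    have h1 : ∑ x : Fin n → Bool, Real.cos (2 * Real.pi * u x - ψ)
        = (S * Complex.exp (↑(-ψ) * Complex.I)).re := by
      rw [hS, Finset.sum_mul, Complex.re_sum]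
      apply Finset.sum_congr rfl
      intro x _
      rw [← Complex.exp_add]
      have : (↑(2 * Real.pi * u x) * Complex.I + ↑(-ψ) * Complex.I)
          = ↑(2 * Real.pi * u x - ψ) * Complex.I := by push_cast; ring
      rw [this, Complex.exp_ofReal_mul_I_re]
    rw [h1]
    have h2 : S * Complex.exp (↑(-ψ) * Complex.I) = ((‖S‖ : ℝ) : ℂ) := by
      conv_lhs => rw [← Complex.norm_mul_exp_arg_mul_I S]
      rw [mul_assoc, ← Complex.exp_add, ← hψ]
      have : (↑ψ * Complex.I + ↑(-ψ) * Complex.I) = 0 := by push_cast; ring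
      rw [this, Complex.exp_zero, mul_one]
    rw [h2, Complex.ofReal_re]
  have hcos : ∑ x : Fin n → Bool, (1 - Real.cos (2 * Real.pi * u x - ψ)) ≤ ε * 2^n := by
    rw [Finset.sum_sub_distrib, hsum, Finset.sum_const, Finset.card_univ]
    have hcard : Fintype.card (Fin n → Bool) = 2^n := by
      rw [Fintype.card_fun, Fintype.card_bool, Fintype.card_fin]
    rw [hcard]
    have : ((2:ℕ)^n : ℝ) = 2^n := by push_cast; ring
    rw [nsmul_eq_mul]
    push_cast
    nlinarith [hSabs]
  refine ⟨ψ / (2 * Real.pi), ?_⟩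
  have hptw : ∀ x : Fin n → Bool,
      8 * ((u x - ψ / (2*Real.pi)) - round (u x - ψ / (2*Real.pi)))^2
        ≤ 1 - Real.cos (2 * Real.pi * u x - ψ) := by
    intro x
    have hπ : Real.pi ≠ 0 := Real.pi_ne_zero
    have harg : 2 * Real.pi * (u x - ψ / (2*Real.pi)) = 2 * Real.pi * u x - ψ := by
      field_simp
    calc 8 * ((u x - ψ / (2*Real.pi)) - round (u x - ψ / (2*Real.pi)))^2
        ≤ 1 - Real.cos (2 * Real.pi * (u x - ψ / (2*Real.pi))) := trig_bound _
      _ = 1 - Real.cos (2 * Real.pi * u x - ψ) := by rw [harg]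
  have h8 : ∑ x : Fin n → Bool,
      8 * ((u x - ψ / (2*Real.pi)) - round (u x - ψ / (2*Real.pi)))^2 ≤ ε * 2^n :=
    le_trans (Finset.sum_le_sum (fun x _ => hptw x)) hcos
  rw [← Finset.mul_sum] at h8
  linarith

lemma step2 (k b d₁ d₂ n : ℕ) (hk : 2 ≤ k) (hb : 3 ≤ b) (hn : k ≤ n) (θ φ : ℝ)
    (J : Finset (Fin n)) (hcardJ : J.card = k) (s : ℕ) (hsumJ : ∑ i ∈ J, (i:ℕ) = s)
    (D : ℝ) (hD : 0 ≤ D)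
    (hF : ∑ x : Fin n → Bool,
        ((((dval b d₁ d₂ n x)^k : ℕ):ℝ)*θ - φ - round ((((dval b d₁ d₂ n x)^k : ℕ):ℝ)*θ - φ))^2
        ≤ D * 2^(n-k)) :
    ∃ P : ℤ, |((k.factorial * (max d₁ d₂ - min d₁ d₂)^k : ℕ):ℝ) * (b:ℝ)^s * θ - P|
      ≤ 2^k * Real.sqrt D := by
  classical
  set F : (Fin n → Bool) → ℝ := fun x =>
    ((((dval b d₁ d₂ n x)^k : ℕ):ℝ)*θ - φ - round ((((dval b d₁ d₂ n x)^k : ℕ):ℝ)*θ - φ))^2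
    with hFdef
  have hFnn : ∀ x, 0 ≤ F x := fun x => sq_nonneg _
  set e := (Equiv.piEquivPiSubtypeProd (fun i : Fin n => i ∈ J) (fun _ => Bool)) with he
  -- split the sum
  have hsplit : ∑ g : {i : Fin n // ¬ i ∈ J} → Bool, ∑ f : {i : Fin n // i ∈ J} → Bool,
      F (e.symm (f, g)) = ∑ x : Fin n → Bool, F x := by
    rw [← Equiv.sum_comp e.symm F, Fintype.sum_prod_type]
    exact Finset.sum_comm
  have hcardg : (Finset.univ : Finset ({i : Fin n // ¬ i ∈ J} → Bool)).card = 2^(n-k) := by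
    rw [Finset.card_univ, Fintype.card_fun, Fintype.card_bool, Fintype.card_subtype_compl]
    congr 1
    rw [Fintype.card_fin]
    congr 1
    exact (Fintype.card_coe J).trans hcardJ
  -- find a good g₀
  have hgood : ∃ g₀ : {i : Fin n // ¬ i ∈ J} → Bool,
      ∑ f : {i : Fin n // i ∈ J} → Bool, F (e.symm (f, g₀)) ≤ D := by
    by_contra hcon
    push_neg at hcon
    have hlt : ∑ g : {i : Fin n // ¬ i ∈ J} → Bool, D
        < ∑ g : {i : Fin n // ¬ i ∈ J} → Bool, ∑ f : {i : Fin n // i ∈ J} → Bool,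
            F (e.symm (f, g)) := by
      apply Finset.sum_lt_sum_of_nonempty
      · exact Finset.univ_nonempty
      · intro g _
        exact hcon g
    rw [Finset.sum_const, hcardg, hsplit, nsmul_eq_mul] at hlt
    push_cast at hlt
    linarith [hF]
  obtain ⟨g₀, hg₀⟩ := hgood
  -- reindex inner sum by powerset
  set tov : ({i : Fin n // i ∈ J} → Bool) → Finset (Fin n) := fun f =>
    (J.attach.filter (fun i => f i)).map (Function.Embedding.subtype _) with htov
  set tof : Finset (Fin n) → ({i : Fin n // i ∈ J} → Bool) := fun v i => decide (i.1 ∈ v) with htof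
  have hmem_tov : ∀ f i, i ∈ tov f ↔ ∃ h : i ∈ J, f ⟨i, h⟩ := by
    intro f i
    simp only [htov, Finset.mem_map, Finset.mem_filter, Finset.mem_attach, true_and,
      Function.Embedding.coe_subtype, Subtype.exists, exists_and_right, exists_eq_right]
  have hli : ∀ f : {i : Fin n // i ∈ J} → Bool, tof (tov f) = f := by
    intro f
    funext i
    rcases i with ⟨i, hi⟩
    simp only [htof]
    cases hfb : f ⟨i, hi⟩ with
    | false =>
      apply decide_eq_false
      intro hmem
      obtain ⟨h, hx⟩ := (hmem_tov f i).mp hmem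
      have hx' : f ⟨i, h⟩ = false := hfb
      rw [hx'] at hx
      exact Bool.false_ne_true hx
    | true => exact decide_eq_true ((hmem_tov f i).mpr ⟨hi, hfb⟩)
  have hreidx : ∀ G : (Fin n → Bool) → ℝ,
      ∑ f : {i : Fin n // i ∈ J} → Bool, G (e.symm (f, g₀))
        = ∑ v ∈ J.powerset, G (e.symm (tof v, g₀)) := by
    intro G
    apply Finset.sum_nbij' (i := fun f => tov f) (j := fun v => tof v)
    · intro f _
      rw [Finset.mem_powerset]
      intro i hi
      exact ((hmem_tov f i).mp hi).1
    · intro v _; exact Finset.mem_univ _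
    · intro f _
      exact hli f
    · intro v hv
      ext i
      rw [hmem_tov]
      simp only [htof]
      constructor
      · rintro ⟨h, hfi⟩
        exact of_decide_eq_true hfi
      · intro hiv
        exact ⟨Finset.mem_powerset.mp hv hiv, decide_eq_true hiv⟩
    · intro f _
      rw [hli f]
  set vert : Finset (Fin n) → (Fin n → Bool) := fun v => e.symm (tof v, g₀) with hvert
  have hcubeF : ∑ v ∈ J.powerset, F (vert v) ≤ D := by
    rw [← hreidx F]
    exact hg₀
  set hbf : Fin n → ℝ := fun i => ((d₂:ℝ) - (d₁:ℝ)) * (b:ℝ)^(i:ℕ) with hhbf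
  set C : ℝ := ∑ i : Fin n, (if h : i ∈ J then (d₁:ℝ)*(b:ℝ)^(i:ℕ)
      else ((if g₀ ⟨i,h⟩ then (d₂:ℝ) else (d₁:ℝ)) * (b:ℝ)^(i:ℕ))) with hC
  have hvalR : ∀ v ∈ J.powerset, ((dval b d₁ d₂ n (vert v) : ℕ):ℝ) = C + ∑ i ∈ v, hbf i := by
    intro v hv
    have hsub := Finset.mem_powerset.mp hv
    have hcast : ((dval b d₁ d₂ n (vert v) : ℕ):ℝ)
        = ∑ i : Fin n, ((if vert v i then (d₂:ℕ) else d₁):ℝ) * (b:ℝ)^(i:ℕ) := by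
      rw [dval]
      push_cast
      rfl
    rw [hcast]
    have hpt : ∀ i : Fin n, ((if vert v i then (d₂:ℕ) else d₁):ℝ) * (b:ℝ)^(i:ℕ)
        = (if h : i ∈ J then (d₁:ℝ)*(b:ℝ)^(i:ℕ)
            else ((if g₀ ⟨i,h⟩ then (d₂:ℝ) else (d₁:ℝ)) * (b:ℝ)^(i:ℕ)))
          + (if i ∈ v then hbf i else 0) := by
      intro i
      by_cases h : i ∈ J
      · have hv1 : vert v i = tof v ⟨i, h⟩ := by
          simp only [hvert, he, Equiv.piEquivPiSubtypeProd_symm_apply, dif_pos h]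
        by_cases hiv : i ∈ v
        · have h2 : tof v ⟨i, h⟩ = true := decide_eq_true hiv
          rw [hv1, h2, dif_pos h, if_pos hiv, if_pos rfl]
          simp only [hhbf]
          ring
        · have h2 : tof v ⟨i, h⟩ = false := decide_eq_false hiv
          rw [hv1, h2, dif_pos h, if_neg hiv]
          simp
      · have hiv : i ∉ v := fun hc => h (hsub hc)
        have hv1 : vert v i = g₀ ⟨i, h⟩ := by
          simp only [hvert, he, Equiv.piEquivPiSubtypeProd_symm_apply, dif_neg h]
        rw [hv1, dif_neg h, if_neg hiv, add_zero]
    rw [Finset.sum_congr rfl (fun i _ => hpt i), Finset.sum_add_distrib, hC]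
    congr 1
    rw [Finset.sum_ite_mem, Finset.univ_inter]
  have hkey := (findiff hbf J k C).2 hcardJ.symm
  have hprod : ∏ i ∈ J, hbf i = ((d₂:ℝ)-(d₁:ℝ))^k * (b:ℝ)^s := by
    simp only [hhbf]
    rw [Finset.prod_mul_distrib, Finset.prod_const, hcardJ, Finset.prod_pow_eq_pow_sum, hsumJ]
  set W : Finset (Fin n) → ℝ := fun v => ((dval b d₁ d₂ n (vert v)^k : ℕ):ℝ)*θ - φ with hW
  have hFW : ∀ v, F (vert v) = (W v - round (W v))^2 := fun v => rfl
  have hWr : ∀ v ∈ J.powerset, |W v - round (W v)| ≤ Real.sqrt D := by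
    intro v hv
    have h1 : (W v - round (W v))^2 ≤ D := by
      rw [← hFW v]
      exact le_trans (Finset.single_le_sum (fun i _ => hFnn (vert i)) hv) hcubeF
    have h2 := Real.sqrt_le_sqrt h1
    rwa [Real.sqrt_sq_eq_abs] at h2
  set PZ : ℤ := ∑ v ∈ J.powerset, (-1:ℤ)^v.card * round (W v) with hPZ
  have hzero : ∑ v ∈ J.powerset, (-1:ℝ)^v.card = 0 := by
    have hJne : J.Nonempty := Finset.card_pos.mp (by omega)
    have h := Finset.sum_powerset_neg_one_pow_card_of_nonempty hJne
    have h2 : (((∑ m ∈ J.powerset, (-1:ℤ)^m.card : ℤ)):ℝ) = 0 := by rw [h]; norm_num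
    push_cast at h2
    exact h2
  have hmain : ∑ v ∈ J.powerset, (-1:ℝ)^v.card * (((dval b d₁ d₂ n (vert v) : ℕ):ℝ)^k)
      = (-1)^k * (k.factorial:ℝ) * (((d₂:ℝ)-(d₁:ℝ))^k * (b:ℝ)^s) := by
    rw [Finset.sum_congr rfl (fun v hv => by rw [hvalR v hv])]
    rw [hkey, hprod]
  have hTsum : ∑ v ∈ J.powerset, (-1:ℝ)^v.card * W v
      = θ * ((-1)^k * (k.factorial:ℝ) * (((d₂:ℝ)-(d₁:ℝ))^k * (b:ℝ)^s)) := by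
    have h0 : ∑ v ∈ J.powerset, (-1:ℝ)^v.card * W v
        = (∑ v ∈ J.powerset, (-1:ℝ)^v.card * (((dval b d₁ d₂ n (vert v) : ℕ):ℝ)^k)) * θ
          - φ * ∑ v ∈ J.powerset, (-1:ℝ)^v.card := by
      rw [Finset.sum_mul, Finset.mul_sum, ← Finset.sum_sub_distrib]
      apply Finset.sum_congr rfl
      intro v hv
      simp only [hW]
      push_cast
      ring
    rw [h0, hzero, hmain]
    ring
  have hdiff : |θ * ((-1:ℝ)^k * (k.factorial:ℝ) * (((d₂:ℝ)-(d₁:ℝ))^k * (b:ℝ)^s)) - (PZ:ℝ)|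
      ≤ 2^k * Real.sqrt D := by
    rw [← hTsum]
    have hPZr : (PZ:ℝ) = ∑ v ∈ J.powerset, (-1:ℝ)^v.card * (round (W v) : ℝ) := by
      rw [hPZ]
      push_cast
      rfl
    rw [hPZr, ← Finset.sum_sub_distrib]
    have hterm : ∀ v ∈ J.powerset, (-1:ℝ)^v.card * W v - (-1:ℝ)^v.card * (round (W v):ℝ)
        = (-1:ℝ)^v.card * (W v - round (W v)) := fun v _ => by ring
    rw [Finset.sum_congr rfl hterm]
    calc |∑ v ∈ J.powerset, (-1:ℝ)^v.card * (W v - round (W v))|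
        ≤ ∑ v ∈ J.powerset, |(-1:ℝ)^v.card * (W v - round (W v))| :=
          Finset.abs_sum_le_sum_abs _ _
      _ ≤ ∑ v ∈ J.powerset, Real.sqrt D := by
          apply Finset.sum_le_sum
          intro v hv
          rw [abs_mul, abs_pow, abs_neg, abs_one, one_pow, one_mul]
          exact hWr v hv
      _ = (2^k : ℝ) * Real.sqrt D := by
          rw [Finset.sum_const, Finset.card_powerset, hcardJ, nsmul_eq_mul]
          push_cast
          ring
  set G : ℝ := (-1:ℝ)^k * (k.factorial:ℝ) * ((d₂:ℝ)-(d₁:ℝ))^k with hG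
  have hKnG : ((k.factorial * (max d₁ d₂ - min d₁ d₂)^k : ℕ):ℝ) = |G| := by
    rw [hG, abs_mul, abs_mul, abs_pow, abs_neg, abs_one, one_pow, one_mul]
    push_cast
    rw [abs_of_nonneg (by positivity : (0:ℝ) ≤ (k.factorial:ℝ))]
    congr 1
    rw [abs_pow]
    congr 1
    rcases le_total d₁ d₂ with h | h
    · rw [max_eq_right h, min_eq_left h, Nat.cast_sub h,
        abs_of_nonneg (by simp [sub_nonneg]; exact_mod_cast h)]
    · rw [max_eq_left h, min_eq_right h, Nat.cast_sub h,
        abs_of_nonpos (by simp [sub_nonpos]; exact_mod_cast h)]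
      push_cast
      ring
  have hGrw : θ * ((-1:ℝ)^k * (k.factorial:ℝ) * (((d₂:ℝ)-(d₁:ℝ))^k * (b:ℝ)^s))
      = G * (b:ℝ)^s * θ := by rw [hG]; ring
  rw [hGrw] at hdiff
  rcases le_or_gt 0 G with hsgn | hsgn
  · refine ⟨PZ, ?_⟩
    have hGeq : ((k.factorial * (max d₁ d₂ - min d₁ d₂)^k : ℕ):ℝ) = G := by
      rw [hKnG, abs_of_nonneg hsgn]
    rw [hGeq]
    exact hdiff
  · refine ⟨-PZ, ?_⟩
    have hGeq : ((k.factorial * (max d₁ d₂ - min d₁ d₂)^k : ℕ):ℝ) = -G := by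
      rw [hKnG, abs_of_neg hsgn]
    rw [hGeq]
    have : -G * (b:ℝ)^s * θ - ((-PZ : ℤ):ℝ) = -(G * (b:ℝ)^s * θ - (PZ:ℝ)) := by
      push_cast
      ring
    rw [this, abs_neg]
    exact hdiff

/-- The measure of the set of `θ ∈ ℝ/ℤ` (identified with `[0,1)`) with
`|μ̂_n(θ)| ≥ 1 - (1/4) b^{-3k²}` is at most `2 b^{k²} N^{-k}`. -/
theorem measure_of_very_large_values (k b d₁ d₂ : ℕ) (hk : 2 ≤ k) (hb : 3 ≤ b)
    (hd₁ : d₁ < b) (hd₂ : d₂ < b) (hne : d₁ ≠ d₂) (hcop : Nat.Coprime d₁ d₂)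
    (n : ℕ) (hn : k ≤ n) (N : ℝ) (hN : N = (b : ℝ) ^ n) :
    MeasureTheory.volume {θ : ℝ | θ ∈ Set.Ico (0 : ℝ) 1 ∧
        1 - (1 / 4) * ((b : ℝ) ^ (3 * k ^ 2))⁻¹ ≤ ‖muHat b k d₁ d₂ n θ‖} ≤
      ENNReal.ofReal (2 * (b : ℝ) ^ (k ^ 2) / N ^ k) := by
  classical
  have hb0 : (0:ℝ) < (b:ℝ) := by
    have h : (0:ℕ) < b := by omega
    exact_mod_cast h
  have hb1 : (1:ℝ) ≤ (b:ℝ) := by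
    have h : (1:ℕ) ≤ b := by omega
    exact_mod_cast h
  obtain ⟨hη0, hη12, hηb1⟩ := eta_bounds k b hk hb
  set D : ℝ := (1/4) * ((b:ℝ)^(3*k^2))⁻¹ * 2^k/8 with hDdef
  set η : ℝ := 2^k * Real.sqrt D with hηdef
  set s₀ : ℕ := ∑ j ∈ Finset.range k, j with hs₀
  set s₁ : ℕ := s₀ + k*(n-k) with hs₁
  set Kn : ℕ := k.factorial * (max d₁ d₂ - min d₁ d₂)^k with hKn
  have hKn1 : 1 ≤ Kn := by
    rw [hKn]
    have h1 : 0 < k.factorial := Nat.factorial_pos k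
    have h2 : 0 < (max d₁ d₂ - min d₁ d₂) := by
      rcases Nat.lt_or_ge d₁ d₂ with h | h
      · rw [max_eq_right h.le, min_eq_left h.le]; omega
      · have : d₂ < d₁ := by omega
        rw [max_eq_left h, min_eq_right h]; omega
    have := (Nat.pow_pos h2 : 0 < _ ^ k)
    exact Nat.one_le_iff_ne_zero.mpr (Nat.mul_ne_zero h1.ne' (Nat.pow_pos h2 : 0 < _ ^ k).ne')
  set M : ℕ := Kn * b^s₀ with hM
  have hM1 : 1 ≤ M := by
    rw [hM]
    have hbp : 0 < b^s₀ := Nat.pow_pos (by omega)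
    exact Nat.one_le_iff_ne_zero.mpr (Nat.mul_ne_zero (by omega) hbp.ne')
  have hMpos : (0:ℝ) < (M:ℝ) := by exact_mod_cast hM1
  set c : ℝ := η / (b:ℝ)^(k*(n-k)) with hc
  have hbkn : (1:ℝ) ≤ (b:ℝ)^(k*(n-k)) := one_le_pow₀ hb1
  have hc0 : 0 ≤ c := by rw [hc]; positivity
  have hcη : c ≤ η := by
    rw [hc, div_le_iff₀ (by positivity)]
    nlinarith
  -- pointwise claim
  have main : ∀ θ : ℝ, 1 - (1/4) * ((b:ℝ)^(3*k^2))⁻¹ ≤ ‖muHat b k d₁ d₂ n θ‖ →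
      ∃ P : ℤ, |(M:ℝ) * θ - P| ≤ c := by
    intro θ hθ
    obtain ⟨φ, hφ⟩ := step1 k b d₁ d₂ n hk hb θ hθ
    have hH : ∀ s, s₀ ≤ s → s ≤ s₁ → ∃ P : ℤ, |(Kn:ℝ) * (b:ℝ)^s * θ - P| ≤ η := by
      intro s hsl hsr
      obtain ⟨J', hJlt, hJcard, hJsum⟩ := exists_subset_sum n k hn (s - s₀) (by omega)
      have hJsum' : ∑ j ∈ J', j = s := by omega
      have hcardJ : (J'.attachFin hJlt).card = k := by
        rw [Finset.card_attachFin]; exact hJcard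
      have hsumJ : ∑ i ∈ J'.attachFin hJlt, (i:ℕ) = s := by
        rw [sum_attachFin]; exact hJsum'
      have hD0 : (0:ℝ) ≤ D := by rw [hDdef]; positivity
      have hFbound : ∑ x : Fin n → Bool,
          ((((dval b d₁ d₂ n x)^k : ℕ):ℝ)*θ - φ - round ((((dval b d₁ d₂ n x)^k : ℕ):ℝ)*θ - φ))^2
          ≤ D * 2^(n-k) := by
        have heq : (1/4) * ((b:ℝ)^(3*k^2))⁻¹ * 2^n / 8 = D * 2^(n-k) := by
          rw [hDdef]
          have h2 : (2:ℝ)^n = 2^k * 2^(n-k) := by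
            rw [← pow_add]
            congr 1
            omega
          rw [h2]
          ring
        rw [← heq]
        exact hφ
      have := step2 k b d₁ d₂ n hk hb hn θ φ (J'.attachFin hJlt) hcardJ s hsumJ D hD0 hFbound
      rw [← hKn] at this
      exact this
    have hdesc := descent b hb Kn θ η hη0 hηb1 s₀ s₁ (by omega) hH
    have hss : s₁ - s₀ = k*(n-k) := by omega
    rw [hss] at hdesc
    obtain ⟨P, hP⟩ := hdesc
    refine ⟨P, ?_⟩
    have hMr : (M:ℝ) = (Kn:ℝ) * (b:ℝ)^s₀ := by
      rw [hM]; push_cast; ring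
    rw [hMr]
    exact hP
  -- covering
  have hsub : {θ : ℝ | θ ∈ Set.Ico (0 : ℝ) 1 ∧
        1 - (1 / 4) * ((b : ℝ) ^ (3 * k ^ 2))⁻¹ ≤ ‖muHat b k d₁ d₂ n θ‖} ⊆
      ⋃ p ∈ Finset.range (M+1), Set.Icc (((p:ℝ) - c)/(M:ℝ)) (((p:ℝ) + c)/(M:ℝ)) := by
    rintro θ ⟨⟨hθ0, hθ1⟩, hθμ⟩
    obtain ⟨P, hP⟩ := main θ hθμ
    obtain ⟨hPa, hPb⟩ := abs_le.mp hP
    have hc12 : c ≤ 1/2 := le_trans hcη hη12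
    have hMθ0 : (0:ℝ) ≤ (M:ℝ) * θ := mul_nonneg hMpos.le hθ0
    have hMθ1 : (M:ℝ) * θ < M := by
      nlinarith
    have hPge : 0 ≤ P := by
      by_contra hcon
      push_neg at hcon
      have hPz : P ≤ -1 := by omega
      have : (P:ℝ) ≤ -1 := by exact_mod_cast hPz
      linarith
    have hPle : (P:ℝ) ≤ M := by
      by_contra hcon
      push_neg at hcon
      have h0 : ((M:ℤ):ℝ) < (P:ℝ) := by push_cast; push_cast at hcon; linarith
      have h1 : (M:ℤ) < P := by exact_mod_cast h0
      have h2 : (M:ℤ) + 1 ≤ P := by omega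
      have : (M:ℝ) + 1 ≤ (P:ℝ) := by exact_mod_cast h2
      linarith
    rw [Set.mem_iUnion₂]
    refine ⟨P.toNat, ?_, ?_⟩
    · rw [Finset.mem_range]
      have hPM : P ≤ (M:ℤ) := by exact_mod_cast hPle
      omega
    · have hPt : ((P.toNat : ℕ):ℝ) = (P:ℝ) := by
        rw [← Int.cast_natCast, Int.toNat_of_nonneg hPge]
      rw [hPt]
      constructor
      · rw [div_le_iff₀ hMpos, mul_comm]
        linarith
      · rw [le_div_iff₀ hMpos, mul_comm]
        linarith
  refine le_trans (MeasureTheory.measure_mono hsub) ?_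
  refine le_trans (MeasureTheory.measure_biUnion_finset_le _ _) ?_
  have hvol : ∀ p ∈ Finset.range (M+1),
      MeasureTheory.volume (Set.Icc (((p:ℝ) - c)/(M:ℝ)) (((p:ℝ) + c)/(M:ℝ)))
        = ENNReal.ofReal (2*c/(M:ℝ)) := by
    intro p _
    rw [Real.volume_Icc]
    congr 1
    field_simp
    ring
  rw [Finset.sum_congr rfl hvol, Finset.sum_const, Finset.card_range, nsmul_eq_mul]
  have hcast : ((M+1 : ℕ) : ENNReal) = ENNReal.ofReal ((M+1 : ℕ):ℝ) := (ENNReal.ofReal_natCast _).symm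
  rw [hcast, ← ENNReal.ofReal_mul (by positivity)]
  apply ENNReal.ofReal_le_ofReal
  have hnk2 : n*k = k^2 + k*(n-k) := by
    obtain ⟨m, hm⟩ : ∃ m, n = k + m := ⟨n - k, by omega⟩
    subst hm
    rw [Nat.add_sub_cancel_left]
    ring
  have hNk : N^k = (b:ℝ)^(k^2) * (b:ℝ)^(k*(n-k)) := by
    rw [hN, ← pow_mul, hnk2, pow_add]
  have hrhs : 2 * (b:ℝ)^(k^2) / N^k = 2 / (b:ℝ)^(k*(n-k)) := by
    rw [hNk]
    have hbk2 : (0:ℝ) < (b:ℝ)^(k^2) := by positivity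
    field_simp
  rw [hrhs]
  have hM2 : ((M+1:ℕ):ℝ) ≤ 2 * M := by
    push_cast
    have : (1:ℝ) ≤ (M:ℝ) := by exact_mod_cast hM1
    linarith
  calc ((M+1:ℕ):ℝ) * (2*c/(M:ℝ)) ≤ (2*(M:ℝ)) * (2*c/(M:ℝ)) := by
        apply mul_le_mul_of_nonneg_right hM2 (by positivity)
    _ = 4 * c := by field_simp; ring
    _ = 4 * η / (b:ℝ)^(k*(n-k)) := by rw [hc]; ring
    _ ≤ 2 / (b:ℝ)^(k*(n-k)) := by
        gcongr
        linarith
end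

section
/- Let b ≥ 3 be an integer and r ∈ ℤ_{≥0}. Suppose that A ⊂ ℤ is a finite set, all of whose elements have at most r nonzero digits in their centred base-b expansion. Then E(A) ≤ (2b)^{4r} |A|². -/
open scoped BigOperators

/-- `x` has at most `r` nonzero digits in its (unique) centred base-`b` expansion,
i.e. an expansion `x = ∑ cᵢ bⁱ` with integer digits `cᵢ ∈ (-b/2, b/2]`. -/
def AtMostCentredDigits (b r : ℕ) (x : ℤ) : Prop :=
  ∃ (m : ℕ) (c : ℕ → ℤ),
    (∀ i, -(b : ℤ) < 2 * c i ∧ 2 * c i ≤ (b : ℤ)) ∧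
    x = ∑ i ∈ Finset.range m, c i * (b : ℤ) ^ i ∧
    ((Finset.range m).filter (fun i => c i ≠ 0)).card ≤ r

/-- The additive energy of a finite set of integers: the number of quadruples
`(a₁,a₂,a₃,a₄) ∈ A⁴` with `a₁ + a₂ = a₃ + a₄`. -/
def additiveEnergy (A : Finset ℤ) : ℕ :=
  (((A ×ˢ A) ×ˢ (A ×ˢ A)).filter (fun p => p.1.1 + p.1.2 = p.2.1 + p.2.2)).card

namespace EnergyAux

open Finset
open scoped Classical

noncomputable section

variable (b : ℕ)

def val (f : ℕ →₀ ℤ) : ℤ := ∑ i ∈ f.support, f i * (b : ℤ) ^ i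
def Cent (f : ℕ →₀ ℤ) : Prop := ∀ i, -(b : ℤ) < 2 * f i ∧ 2 * f i ≤ (b : ℤ)
def pval (w : (ℕ →₀ ℤ) × (ℕ →₀ ℤ)) : ℤ := val b w.1 + val b w.2
def wt (w : (ℕ →₀ ℤ) × (ℕ →₀ ℤ)) : ℕ := w.1.support.card + w.2.support.card
def Cent2 (w : (ℕ →₀ ℤ) × (ℕ →₀ ℤ)) : Prop := Cent b w.1 ∧ Cent b w.2
def psum (w : (ℕ →₀ ℤ) × (ℕ →₀ ℤ)) (P Q : Finset ℕ) : ℤ :=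
  (∑ i ∈ P, w.1 i * (b : ℤ) ^ i) + ∑ i ∈ Q, w.2 i * (b : ℤ) ^ i
def Reduced (w : (ℕ →₀ ℤ) × (ℕ →₀ ℤ)) : Prop :=
  ∀ P ⊆ w.1.support, ∀ Q ⊆ w.2.support, psum b w P Q = 0 → P = ∅ ∧ Q = ∅
def low (w : (ℕ →₀ ℤ) × (ℕ →₀ ℤ)) : ℕ := sInf {i | w.1 i ≠ 0 ∨ w.2 i ≠ 0}
def sig (w : (ℕ →₀ ℤ) × (ℕ →₀ ℤ)) : ℤ := w.1 (low w) + w.2 (low w)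
def epair (w : (ℕ →₀ ℤ) × (ℕ →₀ ℤ)) (n : ℕ) : (ℕ →₀ ℤ) × (ℕ →₀ ℤ) :=
  (w.1.erase n, w.2.erase n)
def mpos (w : (ℕ →₀ ℤ) × (ℕ →₀ ℤ)) : ℕ :=
  sInf {j | low w < j ∧ w.1 j + w.2 j ≠ (b : ℤ) - 1}

/-- instance-stable restriction -/
def keep (p : ℕ → Prop) (f : ℕ →₀ ℤ) : ℕ →₀ ℤ := Finsupp.filter p f

variable {b}

lemma keep_apply_pos {p : ℕ → Prop} (f : ℕ →₀ ℤ) {i : ℕ} (h : p i) : keep p f i = f i :=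
  Finsupp.filter_apply_pos p f h

lemma keep_apply_neg {p : ℕ → Prop} (f : ℕ →₀ ℤ) {i : ℕ} (h : ¬ p i) : keep p f i = 0 :=
  Finsupp.filter_apply_neg p f h

lemma mem_keep_support {p : ℕ → Prop} {f : ℕ →₀ ℤ} {i : ℕ} :
    i ∈ (keep p f).support ↔ i ∈ f.support ∧ p i := by
  constructor
  · intro h
    have hne := Finsupp.mem_support_iff.1 h
    by_cases hp : p i
    · exact ⟨Finsupp.mem_support_iff.2 (by rwa [keep_apply_pos _ hp] at hne), hp⟩
    · exact absurd (keep_apply_neg _ hp) hne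
  · rintro ⟨h1, h2⟩
    refine Finsupp.mem_support_iff.2 ?_
    rw [keep_apply_pos _ h2]
    exact Finsupp.mem_support_iff.1 h1

lemma keep_support_subset {p : ℕ → Prop} {f : ℕ →₀ ℤ} :
    (keep p f).support ⊆ f.support := fun _ h => (mem_keep_support.1 h).1

variable (b)

lemma val_eq_sum_of_subset (f : ℕ →₀ ℤ) (s : Finset ℕ) (h : f.support ⊆ s) :
    val b f = ∑ i ∈ s, f i * (b : ℤ) ^ i := by
  refine Finset.sum_subset h ?_
  intro i _ hi
  simp [Finsupp.notMem_support_iff.1 hi]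

lemma val_keep_add (f : ℕ →₀ ℤ) (p : ℕ → Prop) :
    val b (keep p f) + val b (keep (fun i => ¬ p i) f) = val b f := by
  rw [val_eq_sum_of_subset b (keep p f) f.support keep_support_subset,
    val_eq_sum_of_subset b (keep (fun i => ¬ p i) f) f.support keep_support_subset,
    ← Finset.sum_add_distrib]
  refine Finset.sum_congr rfl fun i _ => ?_
  by_cases h : p i
  · rw [keep_apply_pos _ h, keep_apply_neg _ (by simp [h])]
    ring
  · rw [keep_apply_neg _ h, keep_apply_pos _ (by simp [h] : ¬ p i)]
    ring

lemma val_keep_mem (f : ℕ →₀ ℤ) (s : Finset ℕ) :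
    val b (keep (fun i => i ∈ s) f) = ∑ i ∈ s, f i * (b:ℤ)^i := by
  unfold val
  rw [Finset.sum_congr rfl (fun i hi => by
    rw [keep_apply_pos _ (mem_keep_support.1 hi).2])]
  refine Finset.sum_subset (fun i hi => (mem_keep_support.1 hi).2) ?_
  intro i hi hni
  have : i ∉ f.support := fun hs => hni (mem_keep_support.2 ⟨hs, hi⟩)
  rw [Finsupp.notMem_support_iff.1 this]
  ring

lemma val_erase (f : ℕ →₀ ℤ) (n : ℕ) :
    val b (f.erase n) = val b f - f n * (b : ℤ) ^ n := by
  by_cases hn : n ∈ f.support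
  · have : val b f = f n * (b : ℤ) ^ n + ∑ i ∈ f.support.erase n, f i * (b : ℤ) ^ i :=
      (Finset.add_sum_erase _ _ hn).symm
    rw [this]
    have hs : (f.erase n).support = f.support.erase n := Finsupp.support_erase
    rw [val, hs]
    have : ∀ i ∈ f.support.erase n, (f.erase n) i * (b : ℤ) ^ i = f i * (b : ℤ) ^ i := by
      intro i hi
      rw [Finsupp.erase_ne (Finset.ne_of_mem_erase hi)]
    rw [Finset.sum_congr rfl this]
    ring
  · have h0 : f n = 0 := Finsupp.notMem_support_iff.1 hn
    rw [Finsupp.erase_of_notMem_support hn, h0]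
    ring

variable {b}

lemma exists_nonzero {w : (ℕ →₀ ℤ) × (ℕ →₀ ℤ)} (h : pval b w ≠ 0) :
    ∃ i, w.1 i ≠ 0 ∨ w.2 i ≠ 0 := by
  by_contra hc
  push_neg at hc
  apply h
  have h1 : w.1 = 0 := by ext i; exact (hc i).1
  have h2 : w.2 = 0 := by ext i; exact (hc i).2
  simp [pval, val, h1, h2]

lemma low_spec {w : (ℕ →₀ ℤ) × (ℕ →₀ ℤ)} (h : pval b w ≠ 0) :
    w.1 (low w) ≠ 0 ∨ w.2 (low w) ≠ 0 :=
  Nat.sInf_mem (exists_nonzero h)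

lemma low_le {w : (ℕ →₀ ℤ) × (ℕ →₀ ℤ)} {i : ℕ} (h : w.1 i ≠ 0 ∨ w.2 i ≠ 0) :
    low w ≤ i := Nat.sInf_le h

lemma lt_low {w : (ℕ →₀ ℤ) × (ℕ →₀ ℤ)} {i : ℕ} (h : i < low w) :
    w.1 i = 0 ∧ w.2 i = 0 := by
  have := Nat.notMem_of_lt_sInf h
  simp only [Set.mem_setOf_eq] at this
  push_neg at this
  exact this

lemma low_le_support1 {w : (ℕ →₀ ℤ) × (ℕ →₀ ℤ)} {i : ℕ} (h : i ∈ w.1.support) :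
    low w ≤ i := low_le (Or.inl (Finsupp.mem_support_iff.1 h))

lemma low_le_support2 {w : (ℕ →₀ ℤ) × (ℕ →₀ ℤ)} {i : ℕ} (h : i ∈ w.2.support) :
    low w ≤ i := low_le (Or.inr (Finsupp.mem_support_iff.1 h))

variable (b)

lemma dvd_val (f : ℕ →₀ ℤ) (n : ℕ) (h : ∀ i ∈ f.support, n ≤ i) :
    (b : ℤ)^n ∣ val b f := by
  refine Finset.dvd_sum ?_
  intro i hi
  exact Dvd.dvd.mul_left (pow_dvd_pow _ (h i hi)) _

lemma cent_zero (hb : 3 ≤ b) : Cent b 0 := by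
  intro i
  simp only [Finsupp.coe_zero, Pi.zero_apply, mul_zero]
  constructor
  · have : (3:ℤ) ≤ (b:ℤ) := by exact_mod_cast hb
    linarith
  · positivity

lemma cent_erase (hb : 3 ≤ b) {f : ℕ →₀ ℤ} (h : Cent b f) (n : ℕ) :
    Cent b (f.erase n) := by
  intro i
  rw [Finsupp.erase_apply]
  split
  · exact (cent_zero b hb) i
  · exact h i

lemma cent_keep (hb : 3 ≤ b) {f : ℕ →₀ ℤ} (h : Cent b f) (p : ℕ → Prop) :
    Cent b (keep p f) := by
  intro i
  by_cases hp : p i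
  · rw [keep_apply_pos _ hp]; exact h i
  · rw [keep_apply_neg _ hp]; exact (cent_zero b hb) i

variable {b}

lemma reduced_erase {w : (ℕ →₀ ℤ) × (ℕ →₀ ℤ)} (h : Reduced b w) (n : ℕ) :
    Reduced b (epair w n) := by
  intro P hP Q hQ hsum
  unfold epair at *
  have hs1 : (w.1.erase n).support = w.1.support.erase n := Finsupp.support_erase
  have hs2 : (w.2.erase n).support = w.2.support.erase n := Finsupp.support_erase
  rw [hs1] at hP; rw [hs2] at hQ
  refine h P (hP.trans (Finset.erase_subset _ _)) Q (hQ.trans (Finset.erase_subset _ _)) ?_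
  rw [← hsum]
  unfold psum
  congr 1
  · refine Finset.sum_congr rfl fun i hi => ?_
    rw [Finsupp.erase_ne (Finset.ne_of_mem_erase (hP hi))]
  · refine Finset.sum_congr rfl fun i hi => ?_
    rw [Finsupp.erase_ne (Finset.ne_of_mem_erase (hQ hi))]

lemma reduced_keep {w : (ℕ →₀ ℤ) × (ℕ →₀ ℤ)} (h : Reduced b w) (p : ℕ → Prop) :
    Reduced b (keep p w.1, keep p w.2) := by
  intro P hP Q hQ hsum
  refine h P (hP.trans keep_support_subset) Q (hQ.trans keep_support_subset) ?_
  rw [← hsum]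
  unfold psum
  congr 1
  · refine Finset.sum_congr rfl fun i hi => ?_
    rw [keep_apply_pos _ (mem_keep_support.1 (hP hi)).2]
  · refine Finset.sum_congr rfl fun i hi => ?_
    rw [keep_apply_pos _ (mem_keep_support.1 (hQ hi)).2]

section Facts
variable {b : ℕ}
variable {w : (ℕ →₀ ℤ) × (ℕ →₀ ℤ)} {t : ℤ}

lemma sig_range (hc : Cent2 b w) : -(b:ℤ) < sig w ∧ sig w ≤ (b:ℤ) := by
  have h1 := (hc.1 (low w))
  have h2 := (hc.2 (low w))
  unfold sig
  omega

lemma dvd_low (hv : pval b w = t) : (b:ℤ)^(low w) ∣ t := by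
  rw [← hv]
  exact dvd_add (dvd_val b _ _ (fun i hi => low_le_support1 hi))
    (dvd_val b _ _ (fun i hi => low_le_support2 hi))

lemma pval_epair (hv : pval b w = t) :
    pval b (epair w (low w)) = t - sig w * (b:ℤ)^(low w) := by
  unfold epair pval
  rw [val_erase, val_erase]
  unfold pval at hv
  unfold sig
  linarith [hv]

lemma dvd_epair (hv : pval b w = t) :
    (b:ℤ)^(low w + 1) ∣ t - sig w * (b:ℤ)^(low w) := by
  rw [← pval_epair hv]
  unfold epair pval
  refine dvd_add (dvd_val b _ _ ?_) (dvd_val b _ _ ?_) <;>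
  · intro i hi
    rw [Finsupp.support_erase] at hi
    have h1 := Finset.ne_of_mem_erase hi
    have h2 := Finset.mem_of_mem_erase hi
    have := (by first
      | exact low_le_support1 h2
      | exact low_le_support2 h2 : low w ≤ i)
    omega

/-- characterisation of `low` in case A -/
lemma charA (hb : 3 ≤ b) (hv : pval b w = t) (hd : ¬ (b:ℤ) ∣ sig w) :
    (b:ℤ)^(low w) ∣ t ∧ ¬ (b:ℤ)^(low w + 1) ∣ t := by
  refine ⟨dvd_low hv, fun hdt => hd ?_⟩
  have h2 := dvd_epair hv
  have h3 : (b:ℤ)^(low w + 1) ∣ sig w * (b:ℤ)^(low w) := by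
    have := dvd_sub hdt h2
    simpa using this
  rw [pow_succ, mul_comm ((b:ℤ)^(low w)) (b:ℤ)] at h3
  rcases h3 with ⟨k, hk⟩
  have hb0 : (0:ℤ) < (b:ℤ) := by exact_mod_cast (by omega : 0 < b)
  have hbne : ((b:ℤ)^(low w)) ≠ 0 := by positivity
  refine ⟨k, ?_⟩
  have : sig w * (b:ℤ)^(low w) = ((b:ℤ) * k) * (b:ℤ)^(low w) := by
    rw [hk]; ring
  exact mul_right_cancel₀ hbne this

lemma pow_char_unique {n n' : ℕ} (h : (b:ℤ)^n ∣ t ∧ ¬ (b:ℤ)^(n+1) ∣ t)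
    (h' : (b:ℤ)^n' ∣ t ∧ ¬ (b:ℤ)^(n'+1) ∣ t) : n = n' := by
  by_contra hne
  rcases Nat.lt_or_ge n n' with hlt | hge
  · exact h.2 (dvd_trans (pow_dvd_pow _ (by omega)) h'.1)
  · have : n' < n := by omega
    exact h'.2 (dvd_trans (pow_dvd_pow _ (by omega)) h.1)

lemma pval_split (s : Finset ℕ) (hv : pval b w = t) :
    pval b (keep (fun i => ¬ i ∈ s) w.1, keep (fun i => ¬ i ∈ s) w.2)
      = t - ∑ i ∈ s, (w.1 i + w.2 i) * (b:ℤ)^i := by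
  have h1 := val_keep_add b w.1 (fun i => i ∈ s)
  have h2 := val_keep_add b w.2 (fun i => i ∈ s)
  have h3 := val_keep_mem b w.1 s
  have h4 := val_keep_mem b w.2 s
  unfold pval at hv ⊢
  have hsum : ∑ i ∈ s, (w.1 i + w.2 i) * (b:ℤ)^i
      = (∑ i ∈ s, w.1 i * (b:ℤ)^i) + ∑ i ∈ s, w.2 i * (b:ℤ)^i := by
    rw [← Finset.sum_add_distrib]
    exact Finset.sum_congr rfl (fun i _ => by ring)
  rw [hsum]
  dsimp only
  linarith [hv, h1, h2, h3, h4]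

lemma sig_ne_zero (hr : Reduced b w) (hv : pval b w = t) (ht : t ≠ 0) : sig w ≠ 0 := by
  intro h0
  have hnz := low_spec (w := w) (by rw [hv]; exact ht)
  have h1 : w.1 (low w) ≠ 0 ∧ w.2 (low w) ≠ 0 := by
    unfold sig at h0
    constructor <;>
    · intro hz
      rcases hnz with h | h <;> [apply h; apply h] <;> omega
  have := hr {low w} (by simp [Finsupp.mem_support_iff, h1.1]) {low w}
      (by simp [Finsupp.mem_support_iff, h1.2]) (by
        unfold psum
        simp only [Finset.sum_singleton]
        have : (w.1 (low w) + w.2 (low w)) * (b:ℤ)^(low w) = 0 * (b:ℤ)^(low w) := by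
          unfold sig at h0; rw [h0]
        linarith [this])
  simpa using this.1

lemma sigB (hb : 3 ≤ b) (hc : Cent2 b w) (hr : Reduced b w) (hv : pval b w = t)
    (ht : t ≠ 0) (hd : (b:ℤ) ∣ sig w) : sig w = b := by
  obtain ⟨hlo, hhi⟩ := sig_range hc
  have hnz := sig_ne_zero hr hv ht
  rcases hd with ⟨k, hk⟩
  have hb0 : (0:ℤ) < (b:ℤ) := by exact_mod_cast (by omega : 0 < b)
  have hk1 : k ≤ 1 := by
    by_contra hk1
    push_neg at hk1
    nlinarith
  have hk0 : 0 < k := by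
    by_contra hk0
    push_neg at hk0
    rcases lt_or_eq_of_le hk0 with h | h
    · nlinarith
    · apply hnz; rw [hk, h]; ring
  have : k = 1 := by omega
  rw [hk, this, mul_one]

lemma digsB (hb : 3 ≤ b) (hc : Cent2 b w) (hr : Reduced b w) (hv : pval b w = t)
    (ht : t ≠ 0) (hd : (b:ℤ) ∣ sig w) :
    2 * w.1 (low w) = b ∧ 2 * w.2 (low w) = b := by
  have hs := sigB hb hc hr hv ht hd
  have h1 := hc.1 (low w)
  have h2 := hc.2 (low w)
  unfold sig at hs
  omega

lemma mpos_nonempty (hb : 3 ≤ b) (hv : pval b w = t) (ht : t ≠ 0) :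
    {j | low w < j ∧ w.1 j + w.2 j ≠ (b : ℤ) - 1}.Nonempty := by
  classical
  set N := (w.1.support ∪ w.2.support).sup id + 1 with hN
  refine ⟨N, ?_, ?_⟩
  · have hnz := low_spec (w := w) (by rw [hv]; exact ht)
    have hmem : low w ∈ w.1.support ∪ w.2.support := by
      rcases hnz with h | h
      · exact Finset.mem_union_left _ (Finsupp.mem_support_iff.2 h)
      · exact Finset.mem_union_right _ (Finsupp.mem_support_iff.2 h)
    have := Finset.le_sup (f := id) hmem
    simp only [id] at this
    omega
  · have h1 : w.1 N = 0 := by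
      rw [← Finsupp.notMem_support_iff]
      intro hmem
      have := Finset.le_sup (f := id) (Finset.mem_union_left w.2.support hmem)
      simp only [id] at this
      omega
    have h2 : w.2 N = 0 := by
      rw [← Finsupp.notMem_support_iff]
      intro hmem
      have := Finset.le_sup (f := id) (Finset.mem_union_right w.1.support hmem)
      simp only [id] at this
      omega
    rw [h1, h2]
    have : (3:ℤ) ≤ (b:ℤ) := by exact_mod_cast hb
    omega

lemma mpos_spec (hb : 3 ≤ b) (hv : pval b w = t) (ht : t ≠ 0) :
    low w < mpos b w ∧ w.1 (mpos b w) + w.2 (mpos b w) ≠ (b : ℤ) - 1 :=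
  Nat.sInf_mem (mpos_nonempty hb hv ht)

lemma mpos_chain {j : ℕ} (hj1 : low w < j) (hj2 : j < mpos b w) :
    w.1 j + w.2 j = (b : ℤ) - 1 := by
  have := Nat.notMem_of_lt_sInf (show j < mpos b w from hj2)
  simp only [Set.mem_setOf_eq] at this
  push_neg at this
  exact this hj1

lemma chain_digits (hb : 3 ≤ b) (hc : Cent2 b w) (hr : Reduced b w) (hv : pval b w = t)
    (ht : t ≠ 0) (hd : (b:ℤ) ∣ sig w) {j : ℕ} (hj1 : low w < j) (hj2 : j < mpos b w) :
    w.1 j ≠ 0 ∧ w.2 j ≠ 0 ∧ (2 * w.1 j = (b:ℤ) ∨ 2 * w.1 j = (b:ℤ) - 2) := by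
  have hchain := mpos_chain hj1 hj2
  have hdig := digsB hb hc hr hv ht hd
  have h1 := hc.1 j
  have h2 := hc.2 j
  have hb' : (3:ℤ) ≤ (b:ℤ) := by exact_mod_cast hb
  omega

lemma chain_sum (hb : 3 ≤ b) (hc : Cent2 b w) (hr : Reduced b w) (hv : pval b w = t)
    (ht : t ≠ 0) (hd : (b:ℤ) ∣ sig w) :
    ∑ j ∈ Finset.Ico (low w) (mpos b w), (w.1 j + w.2 j) * (b:ℤ)^j = (b:ℤ)^(mpos b w) := by
  have hdig := digsB hb hc hr hv ht hd
  have hm := (mpos_spec hb hv ht).1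
  have key : ∀ n, low w + 1 ≤ n → n ≤ mpos b w →
      ∑ j ∈ Finset.Ico (low w) n, (w.1 j + w.2 j) * (b:ℤ)^j = (b:ℤ)^n := by
    intro n hn
    induction n, hn using Nat.le_induction with
    | base =>
      intro _
      rw [Finset.sum_Ico_succ_top le_rfl, Finset.Ico_self, Finset.sum_empty, zero_add]
      have hs : w.1 (low w) + w.2 (low w) = (b:ℤ) := by omega
      rw [hs, pow_succ]
      ring
    | succ n hn ih =>
      intro hnM
      rw [Finset.sum_Ico_succ_top (by omega)]
      rw [ih (by omega)]
      have hcc : w.1 n + w.2 n = (b:ℤ) - 1 := mpos_chain (by omega) (by omega)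
      rw [hcc, pow_succ]
      ring
  exact key _ (by omega) le_rfl

lemma pruneB (hb : 3 ≤ b) (hc : Cent2 b w) (hr : Reduced b w) (hv : pval b w = t)
    (ht : t ≠ 0) (hd : (b:ℤ) ∣ sig w) :
    w.1 (mpos b w) + w.2 (mpos b w) ≠ -1 := by
  intro hm1
  have hdig := digsB hb hc hr hv ht hd
  set M := mpos b w with hM
  set P := (keep (fun i => i ∈ Finset.Icc (low w) M) w.1).support with hP
  set Q := (keep (fun i => i ∈ Finset.Icc (low w) M) w.2).support with hQ
  have hsum : psum b w P Q = 0 := by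
    unfold psum
    have e1 : ∑ i ∈ P, w.1 i * (b:ℤ)^i = ∑ i ∈ Finset.Icc (low w) M, w.1 i * (b:ℤ)^i := by
      rw [hP]
      rw [← val_keep_mem b w.1 (Finset.Icc (low w) M)]
      unfold val
      refine Finset.sum_congr rfl fun i hi => ?_
      rw [keep_apply_pos _ (mem_keep_support.1 hi).2]
    have e2 : ∑ i ∈ Q, w.2 i * (b:ℤ)^i = ∑ i ∈ Finset.Icc (low w) M, w.2 i * (b:ℤ)^i := by
      rw [hQ]
      rw [← val_keep_mem b w.2 (Finset.Icc (low w) M)]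
      unfold val
      refine Finset.sum_congr rfl fun i hi => ?_
      rw [keep_apply_pos _ (mem_keep_support.1 hi).2]
    rw [e1, e2]
    have hicc : Finset.Icc (low w) M = Finset.Ico (low w) (M + 1) := by
      rw [Finset.Ico_add_one_right_eq_Icc]
    have hcomb : (∑ i ∈ Finset.Icc (low w) M, w.1 i * (b:ℤ)^i)
        + ∑ i ∈ Finset.Icc (low w) M, w.2 i * (b:ℤ)^i
        = ∑ i ∈ Finset.Icc (low w) M, (w.1 i + w.2 i) * (b:ℤ)^i := by
      rw [← Finset.sum_add_distrib]
      exact Finset.sum_congr rfl (fun i _ => by ring)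
    rw [hcomb, hicc, Finset.sum_Ico_succ_top (by
      have := (mpos_spec hb hv ht).1
      omega : low w ≤ M)]
    rw [chain_sum hb hc hr hv ht hd, hm1]
    ring
  have := hr P (by rw [hP]; exact keep_support_subset) Q (by rw [hQ]; exact keep_support_subset) hsum
  have hlowP : low w ∈ P := by
    rw [hP]
    refine mem_keep_support.2 ⟨Finsupp.mem_support_iff.2 ?_, ?_⟩
    · intro h0; rw [h0] at hdig; omega
    · refine Finset.mem_Icc.2 ⟨le_rfl, ?_⟩
      have := (mpos_spec hb hv ht).1
      omega
  rw [this.1] at hlowP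
  simp at hlowP

lemma pval_fpairB (hb : 3 ≤ b) (hc : Cent2 b w) (hr : Reduced b w) (hv : pval b w = t)
    (ht : t ≠ 0) (hd : (b:ℤ) ∣ sig w) :
    pval b (keep (fun i => ¬ i ∈ Finset.Ico (low w) (mpos b w)) w.1,
            keep (fun i => ¬ i ∈ Finset.Ico (low w) (mpos b w)) w.2)
      = t - (b:ℤ)^(mpos b w) := by
  rw [pval_split _ hv, chain_sum hb hc hr hv ht hd]

lemma charB (hb : 3 ≤ b) (hc : Cent2 b w) (hr : Reduced b w) (hv : pval b w = t)
    (ht : t ≠ 0) (hd : (b:ℤ) ∣ sig w) :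
    (b:ℤ)^(mpos b w) ∣ t ∧ ¬ (b:ℤ)^(mpos b w + 1) ∣ t := by
  set M := mpos b w with hM
  have hfp := pval_fpairB hb hc hr hv ht hd
  have hsupge : ∀ (f : ℕ →₀ ℤ), (∀ i ∈ f.support, low w ≤ i) →
      ∀ i ∈ (keep (fun i => ¬ i ∈ Finset.Ico (low w) M) f).support, M ≤ i := by
    intro f hf i hi
    obtain ⟨hi1, hi2⟩ := mem_keep_support.1 hi
    have := hf i hi1
    simp only [Finset.mem_Ico, not_and, not_lt] at hi2
    exact hi2 this
  have hdvd1 : (b:ℤ)^M ∣ t - (b:ℤ)^M := by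
    rw [← hfp]
    exact dvd_add (dvd_val b _ _ (hsupge w.1 (fun i hi => low_le_support1 hi)))
      (dvd_val b _ _ (hsupge w.2 (fun i hi => low_le_support2 hi)))
  have hdvdM : (b:ℤ)^M ∣ t := by
    have := dvd_add hdvd1 (dvd_refl ((b:ℤ)^M))
    simpa using this
  refine ⟨hdvdM, ?_⟩
  intro hdt
  -- consider also removing position M
  set gp := (keep (fun i => ¬ i ∈ Finset.Icc (low w) M) w.1,
             keep (fun i => ¬ i ∈ Finset.Icc (low w) M) w.2) with hgp
  have hpg : pval b gp = t - (b:ℤ)^M - (w.1 M + w.2 M) * (b:ℤ)^M := by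
    rw [hgp, pval_split _ hv]
    have hicc : Finset.Icc (low w) M = Finset.Ico (low w) (M + 1) := by
      rw [Finset.Ico_add_one_right_eq_Icc]
    rw [hicc, Finset.sum_Ico_succ_top (by
        have := (mpos_spec hb hv ht).1
        omega : low w ≤ M)]
    rw [chain_sum hb hc hr hv ht hd]
    ring
  have hdvd2 : (b:ℤ)^(M+1) ∣ pval b gp := by
    refine dvd_add (dvd_val b _ _ ?_) (dvd_val b _ _ ?_)
    · intro i hi
      obtain ⟨hi1, hi2⟩ := mem_keep_support.1 hi
      have := low_le_support1 (w := w) hi1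
      simp only [Finset.mem_Icc, not_and, not_le] at hi2
      have := hi2 this
      omega
    · intro i hi
      obtain ⟨hi1, hi2⟩ := mem_keep_support.1 hi
      have := low_le_support2 (w := w) hi1
      simp only [Finset.mem_Icc, not_and, not_le] at hi2
      have := hi2 this
      omega
  rw [hpg] at hdvd2
  have hdvd3 : (b:ℤ)^(M+1) ∣ (1 + (w.1 M + w.2 M)) * (b:ℤ)^M := by
    have h5 : (1 + (w.1 M + w.2 M)) * (b:ℤ)^M
        = t - (t - (b:ℤ)^M - (w.1 M + w.2 M) * (b:ℤ)^M) := by ring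
    rw [h5]
    exact dvd_sub hdt hdvd2
  have hb0 : (0:ℤ) < (b:ℤ) := by exact_mod_cast (by omega : 0 < b)
  have hbne : ((b:ℤ)^M) ≠ 0 := by positivity
  have hdvd4 : (b:ℤ) ∣ (1 + (w.1 M + w.2 M)) := by
    rcases hdvd3 with ⟨k, hk⟩
    rw [pow_succ, mul_comm ((b:ℤ)^M) (b:ℤ)] at hk
    refine ⟨k, mul_right_cancel₀ hbne ?_⟩
    rw [hk]; ring
  -- but 1 + σ_M ∈ (-b, b+1], ≠ 0, ≠ b
  have hc1 := hc.1 M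
  have hc2 := hc.2 M
  have hne1 : w.1 M + w.2 M ≠ -1 := pruneB hb hc hr hv ht hd
  have hne2 : w.1 M + w.2 M ≠ (b:ℤ) - 1 := (mpos_spec hb hv ht).2
  rcases hdvd4 with ⟨k, hk⟩
  have hk0 : k ≠ 0 := by
    intro h0; rw [h0, mul_zero] at hk; omega
  have hk1 : k ≠ 1 := by
    intro h1; rw [h1, mul_one] at hk; omega
  have hbig : 1 + (w.1 M + w.2 M) ≤ 2*(b:ℤ) - 1 ∧ -(2*(b:ℤ)) + 1 < 1 + (w.1 M + w.2 M) := by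
    omega
  rcases lt_trichotomy k 0 with hneg | hzero | hpos
  · nlinarith
  · exact hk0 hzero
  · have : 2 ≤ k := by omega
    nlinarith

end Facts

section Count
variable {b : ℕ}

lemma geom_bound {c : ℕ} (hc : 2 ≤ c) : ∀ n : ℕ, ∑ j ∈ Finset.range n, c^j ≤ 2 * c^(n-1)
  | 0 => by simp
  | (n+1) => by
      rw [Finset.sum_range_succ]
      rcases Nat.eq_zero_or_pos n with h0 | hp
      · subst h0; simp
      · have ih := geom_bound hc n
        have h1 : 2 * c^(n-1) ≤ c^n := by
          have hcc : c^n = c * c^(n-1) := by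
            rw [← pow_succ']
            congr 1
            omega
          rw [hcc]
          exact Nat.mul_le_mul_right _ hc
        have h2 : (n+1) - 1 = n := by omega
        rw [h2]
        omega

lemma dvd_small_eq {x y : ℤ} (hb : 3 ≤ b) (hd : (b:ℤ) ∣ (x - y))
    (hx1 : -(b:ℤ) < x) (hx2 : x ≤ b) (hy1 : -(b:ℤ) < y) (hy2 : y ≤ b)
    (hsign : 0 < x ↔ 0 < y) : x = y := by
  rcases hd with ⟨k, hk⟩
  have hb0 : (0:ℤ) < (b:ℤ) := by exact_mod_cast (by omega : 0 < b)
  have hk0 : k = 0 := by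
    rcases lt_trichotomy k 0 with h | h | h
    · exfalso
      have : x - y ≤ -(b:ℤ) := by
        rw [hk]
        have : k ≤ -1 := by omega
        nlinarith
      rcases (by tauto : (0 < x ∧ 0 < y) ∨ (¬ 0 < x ∧ ¬ 0 < y)) with ⟨p1, p2⟩ | ⟨p1, p2⟩
      · omega
      · omega
    · exact h
    · exfalso
      have : (b:ℤ) ≤ x - y := by
        rw [hk]
        have : 1 ≤ k := by omega
        nlinarith
      rcases (by tauto : (0 < x ∧ 0 < y) ∨ (¬ 0 < x ∧ ¬ 0 < y)) with ⟨p1, p2⟩ | ⟨p1, p2⟩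
      · omega
      · omega
  have : x - y = 0 := by rw [hk, hk0, mul_zero]
  omega

lemma single_unique (hb : 3 ≤ b) {i i' : ℕ} {c c' : ℤ}
    (hcb : -(b:ℤ) < 2*c ∧ 2*c ≤ b) (hcb' : -(b:ℤ) < 2*c' ∧ 2*c' ≤ b)
    (hne : c ≠ 0) (hne' : c' ≠ 0) (heq : c * (b:ℤ)^i = c' * (b:ℤ)^i') :
    i = i' ∧ c = c' := by
  have hb0 : (0:ℤ) < (b:ℤ) := by exact_mod_cast (by omega : 0 < b)
  have key : ∀ (j j' : ℕ) (d d' : ℤ), j ≤ j' → -(b:ℤ) < 2*d → 2*d ≤ b → d ≠ 0 → d' ≠ 0 →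
      d * (b:ℤ)^j = d' * (b:ℤ)^j' → j = j' ∧ d = d' := by
    intro j j' d d' hle hd1 hd2 hdne hdne' he
    have hpow : (b:ℤ)^j' = (b:ℤ)^j * (b:ℤ)^(j'-j) := by
      rw [← pow_add]
      congr 1
      omega
    have hbne : ((b:ℤ)^j) ≠ 0 := by positivity
    have hcd : d = d' * (b:ℤ)^(j'-j) := by
      have h2 : d * (b:ℤ)^j = (d' * (b:ℤ)^(j'-j)) * (b:ℤ)^j := by
        rw [he, hpow]; ring
      exact mul_right_cancel₀ hbne h2
    by_cases hjj : j = j'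
    · subst hjj
      simp only [Nat.sub_self, pow_zero, mul_one] at hcd
      exact ⟨rfl, hcd⟩
    · exfalso
      have hd : 1 ≤ j' - j := by omega
      have hpb : (b:ℤ) ≤ (b:ℤ)^(j'-j) := by
        calc (b:ℤ) = (b:ℤ)^1 := (pow_one _).symm
        _ ≤ (b:ℤ)^(j'-j) := pow_le_pow_right₀ (by omega) hd
      have habs : (b:ℤ) ≤ |d| := by
        rw [hcd, abs_mul]
        have h1 : (1:ℤ) ≤ |d'| := Int.one_le_abs hdne'
        have h2 : |(b:ℤ)^(j'-j)| = (b:ℤ)^(j'-j) := abs_of_nonneg (by positivity)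
        calc (b:ℤ) ≤ (b:ℤ)^(j'-j) := hpb
        _ = 1 * |(b:ℤ)^(j'-j)| := by rw [h2]; ring
        _ ≤ |d'| * |(b:ℤ)^(j'-j)| := by
          apply mul_le_mul_of_nonneg_right h1 (abs_nonneg _)
      have : 2*|d| ≤ (b:ℤ) := by rcases abs_cases d with ⟨h, _⟩ | ⟨h, _⟩ <;> omega
      omega
  rcases Nat.le_total i i' with hle | hle
  · exact key i i' c c' hle hcb.1 hcb.2 hne hne' heq
  · obtain ⟨h1, h2⟩ := key i' i c' c hle hcb'.1 hcb'.2 hne' hne heq.symm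
    exact ⟨h1.symm, h2.symm⟩

theorem countD (hb : 3 ≤ b) : ∀ K : ℕ, ∀ t : ℤ, ∀ T : Finset ((ℕ →₀ ℤ) × (ℕ →₀ ℤ)),
    (∀ w ∈ T, Cent2 b w ∧ Reduced b w ∧ wt w ≤ K ∧ pval b w = t) →
    T.card ≤ (2 * b) ^ K := by
  intro K
  induction K using Nat.strong_induction_on with
  | _ K IH =>
  intro t T hT
  by_cases ht : t = 0
  · -- trivial case : T ⊆ {(0,0)}
    have hsub : T ⊆ {((0 : ℕ →₀ ℤ), (0 : ℕ →₀ ℤ))} := by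
      intro w hw
      obtain ⟨hc, hr, _, hv⟩ := hT w hw
      have h0 : psum b w w.1.support w.2.support = 0 := by
        have he : psum b w w.1.support w.2.support = pval b w := rfl
        rw [he, hv, ht]
      obtain ⟨h1, h2⟩ := hr _ Finset.Subset.rfl _ Finset.Subset.rfl h0
      have e1 : w.1 = 0 := by rwa [← Finsupp.support_eq_empty]
      have e2 : w.2 = 0 := by rwa [← Finsupp.support_eq_empty]
      simp only [Finset.mem_singleton]
      exact Prod.ext e1 e2
    calc T.card ≤ ({((0 : ℕ →₀ ℤ), (0 : ℕ →₀ ℤ))} : Finset _).card := Finset.card_le_card hsub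
      _ = 1 := Finset.card_singleton _
      _ ≤ (2*b)^K := Nat.one_le_pow _ _ (by omega)
  -- t ≠ 0
  rcases Nat.eq_zero_or_pos K with hK0 | hKpos
  · -- K = 0 : T is empty
    have hTe : T = ∅ := by
      rw [Finset.eq_empty_iff_forall_notMem]
      intro w hw
      obtain ⟨hc, hr, hk, hv⟩ := hT w hw
      rw [hK0, Nat.le_zero] at hk
      unfold wt at hk
      have h1 : w.1.support = ∅ := Finset.card_eq_zero.1 (by omega)
      have h2 : w.2.support = ∅ := Finset.card_eq_zero.1 (by omega)
      apply ht
      rw [← hv]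
      unfold pval val
      rw [h1, h2]
      simp
    rw [hTe]
    simp
  by_cases hK1 : K = 1
  · -- K = 1 : at most two elements
    subst hK1
    have hval_single : ∀ (i : ℕ) (c : ℤ), c ≠ 0 → val b (Finsupp.single i c) = c * (b:ℤ)^i := by
      intro i c hc
      unfold val
      rw [Finsupp.support_single_ne_zero _ hc, Finset.sum_singleton, Finsupp.single_eq_same]
    have hone : ∀ w ∈ T,
        (w.1 = 0 ∧ ∃ i c, c ≠ 0 ∧ w.2 = Finsupp.single i c ∧ c * (b:ℤ)^i = t) ∨
        (w.2 = 0 ∧ ∃ i c, c ≠ 0 ∧ w.1 = Finsupp.single i c ∧ c * (b:ℤ)^i = t) := by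
      intro w hw
      obtain ⟨hc, hr, hk, hv⟩ := hT w hw
      unfold wt at hk
      rcases Nat.eq_zero_or_pos w.1.support.card with hz | hp
      · left
        have e1 : w.1 = 0 := by
          rw [← Finsupp.support_eq_empty]
          exact Finset.card_eq_zero.1 hz
        refine ⟨e1, ?_⟩
        have hv2 : val b w.2 = t := by
          unfold pval at hv
          rw [e1] at hv
          simpa [val] using hv
        have hc2 : w.2.support.card = 1 := by
          rcases Nat.eq_zero_or_pos w.2.support.card with hz2 | hp2
          · exfalso
            apply ht
            rw [← hv2]
            have : w.2 = 0 := by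
              rw [← Finsupp.support_eq_empty]
              exact Finset.card_eq_zero.1 hz2
            simp [val, this]
          · omega
        obtain ⟨i, c, hcne, hsingle⟩ := Finsupp.card_support_eq_one'.1 hc2
        refine ⟨i, c, hcne, hsingle, ?_⟩
        rw [← hval_single i c hcne, ← hsingle]
        exact hv2
      · right
        have hc1 : w.1.support.card = 1 := by omega
        have e2 : w.2 = 0 := by
          rw [← Finsupp.support_eq_empty]
          exact Finset.card_eq_zero.1 (by omega)
        refine ⟨e2, ?_⟩
        have hv1 : val b w.1 = t := by
          unfold pval at hv
          rw [e2] at hv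
          simpa [val] using hv
        obtain ⟨i, c, hcne, hsingle⟩ := Finsupp.card_support_eq_one'.1 hc1
        refine ⟨i, c, hcne, hsingle, ?_⟩
        rw [← hval_single i c hcne, ← hsingle]
        exact hv1
    have huniq : ∀ w ∈ T, ∀ w' ∈ T, (w.1 = 0 ↔ w'.1 = 0) → w = w' := by
      intro w hw w' hw' hflag
      obtain ⟨hc, _, _, _⟩ := hT w hw
      obtain ⟨hc', _, _, _⟩ := hT w' hw'
      rcases hone w hw with ⟨e1, i, c, hcne, hs, hvv⟩ | ⟨e2, i, c, hcne, hs, hvv⟩ <;>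
        rcases hone w' hw' with ⟨e1', i', c', hcne', hs', hvv'⟩ | ⟨e2', i', c', hcne', hs', hvv'⟩
      · -- both have w.1 = 0
        have hcent : -(b:ℤ) < 2*c ∧ 2*c ≤ b := by
          have := hc.2 i
          rwa [hs, Finsupp.single_eq_same] at this
        have hcent' : -(b:ℤ) < 2*c' ∧ 2*c' ≤ b := by
          have := hc'.2 i'
          rwa [hs', Finsupp.single_eq_same] at this
        obtain ⟨hi, hcc⟩ := single_unique hb hcent hcent' hcne hcne' (by rw [hvv, hvv'])
        exact Prod.ext (e1.trans e1'.symm) (by rw [hs, hs', hi, hcc])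
      · exfalso
        have := hflag.1 e1
        rw [hs'] at this
        exact hcne' (by simpa using Finsupp.single_eq_zero.1 this)
      · exfalso
        have := hflag.2 e1'
        rw [hs] at this
        exact hcne (by simpa using Finsupp.single_eq_zero.1 this)
      · have hcent : -(b:ℤ) < 2*c ∧ 2*c ≤ b := by
          have := hc.1 i
          rwa [hs, Finsupp.single_eq_same] at this
        have hcent' : -(b:ℤ) < 2*c' ∧ 2*c' ≤ b := by
          have := hc'.1 i'
          rwa [hs', Finsupp.single_eq_same] at this
        obtain ⟨hi, hcc⟩ := single_unique hb hcent hcent' hcne hcne' (by rw [hvv, hvv'])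
        exact Prod.ext (by rw [hs, hs', hi, hcc]) (e2.trans e2'.symm)
    have hsmall : T.card ≤ 2 := by
      have hinj : ∀ w ∈ T, ∀ w' ∈ T,
          (fun v : (ℕ →₀ ℤ) × (ℕ →₀ ℤ) => decide (v.1 = 0)) w =
          (fun v : (ℕ →₀ ℤ) × (ℕ →₀ ℤ) => decide (v.1 = 0)) w' → w = w' := by
        intro w hw w' hw' he
        simp only [decide_eq_decide] at he
        exact huniq w hw w' hw' he
      have := Finset.card_le_card_of_injOn
        (fun v : (ℕ →₀ ℤ) × (ℕ →₀ ℤ) => decide (v.1 = 0))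
        (fun _ _ => Finset.mem_univ _) hinj
      simpa using this
    calc T.card ≤ 2 := hsmall
      _ ≤ (2*b)^1 := by rw [pow_one]; omega
  have hK2 : 2 ≤ K := by omega
  -- split by divisibility of the lowest digit sum
  set TB := T.filter (fun w => (b:ℤ) ∣ sig w) with hTBdef
  set TA := T.filter (fun w => ¬ (b:ℤ) ∣ sig w) with hTAdef
  have hcardsplit : TB.card + TA.card = T.card := by
    rw [hTBdef, hTAdef]
    exact Finset.card_filter_add_card_filter_not _
  have hTfacts : ∀ w ∈ TA, Cent2 b w ∧ Reduced b w ∧ wt w ≤ K ∧ pval b w = t := by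
    intro w hw
    exact hT w (Finset.mem_filter.1 hw).1
  have hb0 : (0:ℤ) < (b:ℤ) := by exact_mod_cast (by omega : 0 < b)
  have hTAbound : TA.card ≤ 4 * (2*b)^(K-1) + (2*b) * (2*b)^(K-2) := by
    rcases Finset.eq_empty_or_nonempty TA with hTAe | ⟨w₀, hw₀⟩
    · rw [hTAe]; simp
    set n₀ := low w₀ with hn₀def
    have hlowA : ∀ w ∈ TA, low w = n₀ := by
      intro w hw
      have h1 := charA hb (hTfacts w hw).2.2.2 (Finset.mem_filter.1 hw).2
      have h2 := charA hb (hTfacts w₀ hw₀).2.2.2 (Finset.mem_filter.1 hw₀).2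
      exact pow_char_unique h1 h2
    have hres : ∀ w ∈ TA, (b:ℤ)^(n₀+1) ∣ t - sig w * (b:ℤ)^n₀ := by
      intro w hw
      have h := dvd_epair (hTfacts w hw).2.2.2
      rwa [hlowA w hw] at h
    have hdiff : ∀ w ∈ TA, ∀ w' ∈ TA, (b:ℤ) ∣ (sig w - sig w') := by
      intro w hw w' hw'
      have h1 := hres w hw
      have h2 := hres w' hw'
      have h3 : (b:ℤ)^(n₀+1) ∣ (sig w' - sig w) * (b:ℤ)^n₀ := by
        have h4 := dvd_sub h1 h2
        have he : (t - sig w * (b:ℤ)^n₀) - (t - sig w' * (b:ℤ)^n₀)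
            = (sig w' - sig w) * (b:ℤ)^n₀ := by ring
        rwa [he] at h4
      rcases h3 with ⟨k, hk⟩
      have hbne : ((b:ℤ)^n₀) ≠ 0 := by positivity
      refine ⟨-k, ?_⟩
      have h5 : (sig w' - sig w) * (b:ℤ)^n₀ = ((b:ℤ) * k) * (b:ℤ)^n₀ := by
        rw [hk, pow_succ]; ring
      have h6 := mul_right_cancel₀ hbne h5
      linear_combination -h6
    have hsig_eq : ∀ w ∈ TA, ∀ w' ∈ TA, ((0 < sig w) ↔ (0 < sig w')) → sig w = sig w' := by
      intro w hw w' hw' hs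
      obtain ⟨hr1, hr2⟩ := sig_range (hTfacts w hw).1
      obtain ⟨hr1', hr2'⟩ := sig_range (hTfacts w' hw').1
      exact dvd_small_eq hb (hdiff w hw w' hw') hr1 hr2 hr1' hr2' hs
    have hsig_ne : ∀ w ∈ TA, sig w ≠ 0 := by
      intro w hw h0
      exact (Finset.mem_filter.1 hw).2 (by rw [h0]; exact dvd_zero _)
    -- generic fiber bound
    have hfib : ∀ x y : ℤ, ∀ cost : ℕ,
        cost = (if x = 0 then 0 else 1) + (if y = 0 then 0 else 1) →
        ¬(x = 0 ∧ y = 0) → ∀ S : Finset ((ℕ →₀ ℤ) × (ℕ →₀ ℤ)), S ⊆ TA →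
        (∀ w ∈ S, w.1 n₀ = x ∧ w.2 n₀ = y) →
        S.card ≤ (2*b)^(K - cost) := by
      intro x y cost hcost hxy S hS hSv
      have hcost1 : 1 ≤ cost := by
        by_cases hx : x = 0 <;> by_cases hy : y = 0 <;>
          simp [hx, hy] at hcost ⊢ <;> omega
      have hinj : ∀ w ∈ S, ∀ w' ∈ S, epair w n₀ = epair w' n₀ → w = w' := by
        intro w hw w' hw' he
        obtain ⟨hx1, hy1⟩ := hSv w hw
        obtain ⟨hx1', hy1'⟩ := hSv w' hw'
        have he1 : w.1.erase n₀ = w'.1.erase n₀ := congrArg Prod.fst he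
        have he2 : w.2.erase n₀ = w'.2.erase n₀ := congrArg Prod.snd he
        refine Prod.ext ?_ ?_
        · ext i
          by_cases hi : i = n₀
          · rw [hi, hx1, hx1']
          · rw [← Finsupp.erase_ne (f := w.1) hi, ← Finsupp.erase_ne (f := w'.1) hi, he1]
        · ext i
          by_cases hi : i = n₀
          · rw [hi, hy1, hy1']
          · rw [← Finsupp.erase_ne (f := w.2) hi, ← Finsupp.erase_ne (f := w'.2) hi, he2]
      have hcard : S.card = (S.image (fun w => epair w n₀)).card :=
        (Finset.card_image_of_injOn (fun w hw w' hw' => hinj w hw w' hw')).symm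
      rw [hcard]
      refine IH (K - cost) (by omega) (t - (x + y) * (b:ℤ)^n₀) _ ?_
      intro u hu
      obtain ⟨w, hw, rfl⟩ := Finset.mem_image.1 hu
      obtain ⟨hc, hr, hk, hv⟩ := hTfacts w (hS hw)
      obtain ⟨hx1, hy1⟩ := hSv w hw
      refine ⟨⟨cent_erase b hb hc.1 n₀, cent_erase b hb hc.2 n₀⟩, reduced_erase hr n₀, ?_, ?_⟩
      · -- weight
        unfold wt at hk ⊢
        unfold epair
        by_cases hx : x = 0 <;> by_cases hy : y = 0
        · exact absurd ⟨hx, hy⟩ hxy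
        · have hcost' : cost = 1 := by simp [hx, hy] at hcost; omega
          have e1 : w.1.erase n₀ = w.1 := Finsupp.erase_of_notMem_support
            (by rw [Finsupp.mem_support_iff]; push_neg; rw [hx1, hx])
          have hmem : n₀ ∈ w.2.support := Finsupp.mem_support_iff.2 (by rw [hy1]; exact hy)
          have e2 : (w.2.erase n₀).support.card = w.2.support.card - 1 := by
            rw [Finsupp.support_erase, Finset.card_erase_of_mem hmem]
          have hpos : 1 ≤ w.2.support.card := Finset.card_pos.2 ⟨n₀, hmem⟩
          rw [e1, e2, hcost']
          dsimp only
          omega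
        · have hcost' : cost = 1 := by simp [hx, hy] at hcost; omega
          have e2 : w.2.erase n₀ = w.2 := Finsupp.erase_of_notMem_support
            (by rw [Finsupp.mem_support_iff]; push_neg; rw [hy1, hy])
          have hmem : n₀ ∈ w.1.support := Finsupp.mem_support_iff.2 (by rw [hx1]; exact hx)
          have e1 : (w.1.erase n₀).support.card = w.1.support.card - 1 := by
            rw [Finsupp.support_erase, Finset.card_erase_of_mem hmem]
          have hpos : 1 ≤ w.1.support.card := Finset.card_pos.2 ⟨n₀, hmem⟩
          rw [e1, e2, hcost']
          dsimp only
          omega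
        · have hcost' : cost = 2 := by simp [hx, hy] at hcost; omega
          have hmem1 : n₀ ∈ w.1.support := Finsupp.mem_support_iff.2 (by rw [hx1]; exact hx)
          have hmem2 : n₀ ∈ w.2.support := Finsupp.mem_support_iff.2 (by rw [hy1]; exact hy)
          have e1 : (w.1.erase n₀).support.card = w.1.support.card - 1 := by
            rw [Finsupp.support_erase, Finset.card_erase_of_mem hmem1]
          have e2 : (w.2.erase n₀).support.card = w.2.support.card - 1 := by
            rw [Finsupp.support_erase, Finset.card_erase_of_mem hmem2]
          have hpos1 : 1 ≤ w.1.support.card := Finset.card_pos.2 ⟨n₀, hmem1⟩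
          have hpos2 : 1 ≤ w.2.support.card := Finset.card_pos.2 ⟨n₀, hmem2⟩
          rw [e1, e2, hcost']
          omega
      · have hpe := pval_epair (w := w) hv
        rw [hlowA w (hS hw)] at hpe
        have hsg : sig w = x + y := by
          unfold sig
          rw [hlowA w (hS hw), hx1, hy1]
        rw [hsg] at hpe
        exact hpe
    -- split into singles and doubles
    set tok := fun w : (ℕ →₀ ℤ) × (ℕ →₀ ℤ) => (w.1 n₀, w.2 n₀) with htokdef
    set TAs := TA.filter (fun w => w.1 n₀ = 0 ∨ w.2 n₀ = 0) with hTAsdef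
    set TAd := TA.filter (fun w => ¬ (w.1 n₀ = 0 ∨ w.2 n₀ = 0)) with hTAddef
    have hsplitA : TAs.card + TAd.card = TA.card := by
      rw [hTAsdef, hTAddef]
      exact Finset.card_filter_add_card_filter_not _
    have htok_sig : ∀ w ∈ TA, sig w = (tok w).1 + (tok w).2 := by
      intro w hw
      unfold sig
      rw [hlowA w hw, htokdef]
    -- singles
    have hsingles : TAs.card ≤ 4 * (2*b)^(K-1) := by
      have hmaps : ∀ w ∈ TAs, tok w ∈ TAs.image tok := fun w hw => Finset.mem_image_of_mem _ hw
      rw [Finset.card_eq_sum_card_fiberwise hmaps]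
      have hfbound : ∀ τ ∈ TAs.image tok,
          (TAs.filter (fun w => tok w = τ)).card ≤ (2*b)^(K-1) := by
        intro τ hτ
        obtain ⟨wτ, hwτ, hτeq⟩ := Finset.mem_image.1 hτ
        have hwτTA : wτ ∈ TA := (Finset.mem_filter.1 hwτ).1
        have hsng : τ.1 = 0 ∨ τ.2 = 0 := by
          have := (Finset.mem_filter.1 hwτ).2
          rw [← hτeq]
          exact this
        have hnb : ¬(τ.1 = 0 ∧ τ.2 = 0) := by
          rintro ⟨h1, h2⟩
          have hs0 := hsig_ne wτ hwτTA
          apply hs0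
          rw [htok_sig wτ hwτTA, hτeq, h1, h2, add_zero]
        have hcost : (1:ℕ) = (if τ.1 = 0 then 0 else 1) + (if τ.2 = 0 then 0 else 1) := by
          rcases hsng with h | h
          · have h2 : ¬ τ.2 = 0 := fun hh => hnb ⟨h, hh⟩
            simp [h, h2]
          · by_cases h1 : τ.1 = 0
            · exact absurd ⟨h1, h⟩ hnb
            · simp [h1, h]
        have := hfib τ.1 τ.2 1 hcost hnb (TAs.filter (fun w => tok w = τ))
          ((Finset.filter_subset _ _).trans (Finset.filter_subset _ _)) ?_
        · exact this
        · intro w hw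
          have hwe := (Finset.mem_filter.1 hw).2
          rw [htokdef] at hwe
          exact ⟨congrArg Prod.fst hwe, congrArg Prod.snd hwe⟩
      calc ∑ τ ∈ TAs.image tok, (TAs.filter (fun w => tok w = τ)).card
          ≤ ∑ _τ ∈ TAs.image tok, (2*b)^(K-1) := Finset.sum_le_sum hfbound
        _ = (TAs.image tok).card * (2*b)^(K-1) := by
            rw [Finset.sum_const, smul_eq_mul]
        _ ≤ 4 * (2*b)^(K-1) := by
            apply Nat.mul_le_mul_right
            -- image card ≤ 4
            have hinj4 : ∀ τ ∈ TAs.image tok, ∀ τ' ∈ TAs.image tok,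
                (decide (0 < τ.1 + τ.2), decide (τ.1 = 0)) =
                (decide (0 < τ'.1 + τ'.2), decide (τ'.1 = 0)) → τ = τ' := by
              intro τ hτ τ' hτ' he
              obtain ⟨w, hw, hwe⟩ := Finset.mem_image.1 hτ
              obtain ⟨w', hw', hwe'⟩ := Finset.mem_image.1 hτ'
              have hwTA : w ∈ TA := (Finset.mem_filter.1 hw).1
              have hwTA' : w' ∈ TA := (Finset.mem_filter.1 hw').1
              have hsw : sig w = τ.1 + τ.2 := by rw [htok_sig w hwTA, hwe]
              have hsw' : sig w' = τ'.1 + τ'.2 := by rw [htok_sig w' hwTA', hwe']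
              simp only [Prod.mk.injEq, decide_eq_decide] at he
              have hseq : sig w = sig w' := hsig_eq w hwTA w' hwTA'
                (by rw [hsw, hsw']; exact he.1)
              have hs1 : τ.1 = 0 ∨ τ.2 = 0 := by
                have := (Finset.mem_filter.1 hw).2; rw [← hwe]; exact this
              have hs1' : τ'.1 = 0 ∨ τ'.2 = 0 := by
                have := (Finset.mem_filter.1 hw').2; rw [← hwe']; exact this
              have hsum : τ.1 + τ.2 = τ'.1 + τ'.2 := by
                rw [← hsw, ← hsw', hseq]
              by_cases h0 : τ.1 = 0
              · have h0' : τ'.1 = 0 := he.2.1 h0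
                refine Prod.ext (by rw [h0, h0']) (by omega)
              · have h0' : ¬ τ'.1 = 0 := fun hh => h0 (he.2.2 hh)
                have h2 : τ.2 = 0 := hs1.resolve_left h0
                have h2' : τ'.2 = 0 := hs1'.resolve_left h0'
                refine Prod.ext (by omega) (by rw [h2, h2'])
            have := Finset.card_le_card_of_injOn
              (fun τ : ℤ × ℤ => ((decide (0 < τ.1 + τ.2)), decide (τ.1 = 0)))
              (fun τ _ => Finset.mem_univ _) (fun τ hτ τ' hτ' => hinj4 τ hτ τ' hτ')
            simpa using this
    -- doubles
    have hdoubles : TAd.card ≤ (2*b) * (2*b)^(K-2) := by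
      have hmaps : ∀ w ∈ TAd, tok w ∈ TAd.image tok := fun w hw => Finset.mem_image_of_mem _ hw
      rw [Finset.card_eq_sum_card_fiberwise hmaps]
      have hfbound : ∀ τ ∈ TAd.image tok,
          (TAd.filter (fun w => tok w = τ)).card ≤ (2*b)^(K-2) := by
        intro τ hτ
        obtain ⟨wτ, hwτ, hτeq⟩ := Finset.mem_image.1 hτ
        have hdbl := (Finset.mem_filter.1 hwτ).2
        push_neg at hdbl
        have h1 : τ.1 ≠ 0 := by
          rw [← hτeq]; exact hdbl.1
        have h2 : τ.2 ≠ 0 := by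
          rw [← hτeq]; exact hdbl.2
        have hcost : (2:ℕ) = (if τ.1 = 0 then 0 else 1) + (if τ.2 = 0 then 0 else 1) := by
          simp [h1, h2]
        refine hfib τ.1 τ.2 2 hcost (by tauto) _
          ((Finset.filter_subset _ _).trans (Finset.filter_subset _ _)) ?_
        intro w hw
        have hwe := (Finset.mem_filter.1 hw).2
        rw [htokdef] at hwe
        exact ⟨congrArg Prod.fst hwe, congrArg Prod.snd hwe⟩
      calc ∑ τ ∈ TAd.image tok, (TAd.filter (fun w => tok w = τ)).card
          ≤ ∑ _τ ∈ TAd.image tok, (2*b)^(K-2) := Finset.sum_le_sum hfbound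
        _ = (TAd.image tok).card * (2*b)^(K-2) := by rw [Finset.sum_const, smul_eq_mul]
        _ ≤ (2*b) * (2*b)^(K-2) := by
            apply Nat.mul_le_mul_right
            -- image card ≤ 2b
            have hcommon : ∀ τ ∈ TAd.image tok,
                (-(b:ℤ) < 2*τ.1 ∧ 2*τ.1 ≤ b) ∧ (-(b:ℤ) < 2*τ.2 ∧ 2*τ.2 ≤ b) ∧ τ.1 + τ.2 ≠ 0 := by
              intro τ hτ
              obtain ⟨w, hw, hwe⟩ := Finset.mem_image.1 hτ
              have hwTA : w ∈ TA := (Finset.mem_filter.1 hw).1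
              have hc := (hTfacts w hwTA).1
              have hb1 := hc.1 n₀
              have hb2 := hc.2 n₀
              have he1 : w.1 n₀ = τ.1 := congrArg Prod.fst hwe
              have he2 : w.2 n₀ = τ.2 := congrArg Prod.snd hwe
              rw [he1] at hb1
              rw [he2] at hb2
              refine ⟨hb1, hb2, ?_⟩
              have := hsig_ne w hwTA
              rwa [htok_sig w hwTA, hwe] at this
            have hsame : ∀ τ ∈ TAd.image tok, ∀ τ' ∈ TAd.image tok,
                ((0 < τ.1 + τ.2) ↔ (0 < τ'.1 + τ'.2)) → τ.1 + τ.2 = τ'.1 + τ'.2 := by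
              intro τ hτ τ' hτ' hflag
              obtain ⟨w, hw, hwe⟩ := Finset.mem_image.1 hτ
              obtain ⟨w', hw', hwe'⟩ := Finset.mem_image.1 hτ'
              have hwTA : w ∈ TA := (Finset.mem_filter.1 hw).1
              have hwTA' : w' ∈ TA := (Finset.mem_filter.1 hw').1
              have e1 : sig w = τ.1 + τ.2 := by rw [htok_sig w hwTA, hwe]
              have e2 : sig w' = τ'.1 + τ'.2 := by rw [htok_sig w' hwTA', hwe']
              rw [← e1, ← e2]
              exact hsig_eq w hwTA w' hwTA' (by rw [e1, e2]; exact hflag)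
            set Ip := (TAd.image tok).filter (fun τ => 0 < τ.1 + τ.2) with hIp
            set In := (TAd.image tok).filter (fun τ => ¬ 0 < τ.1 + τ.2) with hIn
            have hspl : Ip.card + In.card = (TAd.image tok).card := by
              rw [hIp, hIn]
              exact Finset.card_filter_add_card_filter_not _
            have hIpcard : Ip.card ≤ b := by
              rcases Finset.eq_empty_or_nonempty Ip with he | ⟨τ₀, hτ₀⟩
              · rw [he]; simp
              have hτ₀I : τ₀ ∈ TAd.image tok := (Finset.mem_filter.1 hτ₀).1
              set s0 := τ₀.1 + τ₀.2 with hs0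
              have hs0pos : 0 < s0 := (Finset.mem_filter.1 hτ₀).2
              have hIcc : ∀ τ ∈ Ip, τ.1 ∈ Finset.Icc (s0 - (b:ℤ)/2) ((b:ℤ)/2) := by
                intro τ hτ
                have hτI : τ ∈ TAd.image tok := (Finset.mem_filter.1 hτ).1
                have hpos : 0 < τ.1 + τ.2 := (Finset.mem_filter.1 hτ).2
                have hsum : τ.1 + τ.2 = s0 := hsame τ hτI τ₀ hτ₀I (by constructor <;> intro <;> [exact hs0pos; exact hpos])
                obtain ⟨hb1, hb2, _⟩ := hcommon τ hτI
                rw [Finset.mem_Icc]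
                omega
              have hinj : ∀ τ ∈ Ip, ∀ τ' ∈ Ip, τ.1 = τ'.1 → τ = τ' := by
                intro τ hτ τ' hτ' he
                have h1 : τ.1 + τ.2 = s0 := hsame τ (Finset.mem_filter.1 hτ).1 τ₀ hτ₀I
                  (by constructor <;> intro <;> [exact hs0pos; exact (Finset.mem_filter.1 hτ).2])
                have h2 : τ'.1 + τ'.2 = s0 := hsame τ' (Finset.mem_filter.1 hτ').1 τ₀ hτ₀I
                  (by constructor <;> intro <;> [exact hs0pos; exact (Finset.mem_filter.1 hτ').2])
                exact Prod.ext he (by omega)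
              have hle := Finset.card_le_card_of_injOn (fun τ : ℤ × ℤ => τ.1) hIcc
                (fun τ hτ τ' hτ' he => hinj τ hτ τ' hτ' he)
              rw [Int.card_Icc] at hle
              refine hle.trans ?_
              have : ((b:ℤ)/2 + 1 - (s0 - (b:ℤ)/2)).toNat ≤ b := by omega
              exact this
            have hIncard : In.card ≤ b := by
              rcases Finset.eq_empty_or_nonempty In with he | ⟨τ₀, hτ₀⟩
              · rw [he]; simp
              have hτ₀I : τ₀ ∈ TAd.image tok := (Finset.mem_filter.1 hτ₀).1
              set s0 := τ₀.1 + τ₀.2 with hs0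
              have hs0neg : ¬ 0 < s0 := (Finset.mem_filter.1 hτ₀).2
              have hs0ne : s0 ≠ 0 := (hcommon τ₀ hτ₀I).2.2
              have hIcc : ∀ τ ∈ In, τ.1 ∈ Finset.Icc (-((b:ℤ)/2)) (s0 + (b:ℤ)/2) := by
                intro τ hτ
                have hτI : τ ∈ TAd.image tok := (Finset.mem_filter.1 hτ).1
                have hpos : ¬ 0 < τ.1 + τ.2 := (Finset.mem_filter.1 hτ).2
                have hsum : τ.1 + τ.2 = s0 := hsame τ hτI τ₀ hτ₀I (by
                  constructor <;> intro h <;> [exact absurd h hpos; exact absurd h hs0neg])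
                obtain ⟨hb1, hb2, _⟩ := hcommon τ hτI
                rw [Finset.mem_Icc]
                omega
              have hinj : ∀ τ ∈ In, ∀ τ' ∈ In, τ.1 = τ'.1 → τ = τ' := by
                intro τ hτ τ' hτ' he
                have h1 : τ.1 + τ.2 = s0 := hsame τ (Finset.mem_filter.1 hτ).1 τ₀ hτ₀I (by
                  constructor <;> intro h <;>
                    [exact absurd h (Finset.mem_filter.1 hτ).2; exact absurd h hs0neg])
                have h2 : τ'.1 + τ'.2 = s0 := hsame τ' (Finset.mem_filter.1 hτ').1 τ₀ hτ₀I (by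
                  constructor <;> intro h <;>
                    [exact absurd h (Finset.mem_filter.1 hτ').2; exact absurd h hs0neg])
                exact Prod.ext he (by omega)
              have hle := Finset.card_le_card_of_injOn (fun τ : ℤ × ℤ => τ.1) hIcc
                (fun τ hτ τ' hτ' he => hinj τ hτ τ' hτ' he)
              rw [Int.card_Icc] at hle
              refine hle.trans ?_
              have : (s0 + (b:ℤ)/2 + 1 - -((b:ℤ)/2)).toNat ≤ b := by omega
              exact this
            omega
    omega
  have hTBfacts : ∀ w ∈ TB, Cent2 b w ∧ Reduced b w ∧ wt w ≤ K ∧ pval b w = t := by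
    intro w hw
    exact hT w (Finset.mem_filter.1 hw).1
  have hTBbound : TB.card ≤ 2 * (2*b)^(K-2) := by
    rcases Finset.eq_empty_or_nonempty TB with hTBe | ⟨w₁, hw₁⟩
    · rw [hTBe]; simp
    set M := mpos b w₁ with hMdef
    have hdvdw : ∀ w ∈ TB, (b:ℤ) ∣ sig w := fun w hw => (Finset.mem_filter.1 hw).2
    have hMall : ∀ w ∈ TB, mpos b w = M := by
      intro w hw
      obtain ⟨hc, hr, hk, hv⟩ := hTBfacts w hw
      obtain ⟨hc1, hr1, hk1, hv1⟩ := hTBfacts w₁ hw₁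
      exact pow_char_unique (charB hb hc hr hv ht (hdvdw w hw))
        (charB hb hc1 hr1 hv1 ht (hdvdw w₁ hw₁))
    have hlowM : ∀ w ∈ TB, low w < M := by
      intro w hw
      obtain ⟨hc, hr, hk, hv⟩ := hTBfacts w hw
      have h := (mpos_spec hb hv ht).1
      rwa [hMall w hw] at h
    have hIcosub : ∀ w ∈ TB, Finset.Ico (low w) M ⊆ w.1.support ∧
        Finset.Ico (low w) M ⊆ w.2.support := by
      intro w hw
      obtain ⟨hc, hr, hk, hv⟩ := hTBfacts w hw
      have hdig := digsB hb hc hr hv ht (hdvdw w hw)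
      have hb3 : (3:ℤ) ≤ (b:ℤ) := by exact_mod_cast hb
      constructor
      · intro j hj
        rw [Finset.mem_Ico] at hj
        rcases Nat.eq_or_lt_of_le hj.1 with heq | hlt
        · refine Finsupp.mem_support_iff.2 ?_
          rw [← heq]
          intro h0
          rw [h0] at hdig
          omega
        · have hcd := chain_digits hb hc hr hv ht (hdvdw w hw) hlt
            (by rw [hMall w hw]; exact hj.2)
          exact Finsupp.mem_support_iff.2 hcd.1
      · intro j hj
        rw [Finset.mem_Ico] at hj
        rcases Nat.eq_or_lt_of_le hj.1 with heq | hlt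
        · refine Finsupp.mem_support_iff.2 ?_
          rw [← heq]
          intro h0
          rw [h0] at hdig
          omega
        · have hcd := chain_digits hb hc hr hv ht (hdvdw w hw) hlt
            (by rw [hMall w hw]; exact hj.2)
          exact Finsupp.mem_support_iff.2 hcd.2.1
    have h2lK : ∀ w ∈ TB, 2 * (M - low w) ≤ K := by
      intro w hw
      obtain ⟨hc, hr, hk, hv⟩ := hTBfacts w hw
      obtain ⟨hsub1, hsub2⟩ := hIcosub w hw
      have hca1 := Finset.card_le_card hsub1
      have hca2 := Finset.card_le_card hsub2
      rw [Nat.card_Ico] at hca1 hca2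
      unfold wt at hk
      omega
    have hmaps : ∀ w ∈ TB, low w ∈ TB.image low := fun w hw => Finset.mem_image_of_mem _ hw
    rw [Finset.card_eq_sum_card_fiberwise hmaps]
    have hfbound : ∀ i₀ ∈ TB.image low,
        (TB.filter (fun w => low w = i₀)).card ≤ (2*b)^(K - 1 - (M - i₀)) := by
      intro i₀ hi₀
      obtain ⟨wι, hwι, hιeq⟩ := Finset.mem_image.1 hi₀
      have hi₀M : i₀ < M := by rw [← hιeq]; exact hlowM wι hwι
      have h2l : 2 * (M - i₀) ≤ K := by rw [← hιeq]; exact h2lK wι hwι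
      set l := M - i₀ with hldef
      have hl1 : 1 ≤ l := by omega
      set F := TB.filter (fun w => low w = i₀) with hFdef
      set kp := fun w : (ℕ →₀ ℤ) × (ℕ →₀ ℤ) =>
        (keep (fun i => ¬ i ∈ Finset.Ico i₀ M) w.1,
         keep (fun i => ¬ i ∈ Finset.Ico i₀ M) w.2) with hkpdef
      set bits := fun w : (ℕ →₀ ℤ) × (ℕ →₀ ℤ) =>
        (Finset.Ico (i₀+1) M).filter (fun j => 2 * w.1 j = (b:ℤ)) with hbitsdef
      -- digit structure of elements of F on the chain
      have hFdig : ∀ w ∈ F, 2 * w.1 i₀ = (b:ℤ) ∧ 2 * w.2 i₀ = (b:ℤ) ∧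
          ∀ j, i₀ < j → j < M →
            ((2 * w.1 j = (b:ℤ) ∨ 2 * w.1 j = (b:ℤ) - 2) ∧ w.1 j + w.2 j = (b:ℤ) - 1) := by
        intro w hw
        have hwTB : w ∈ TB := (Finset.mem_filter.1 hw).1
        have hlw : low w = i₀ := (Finset.mem_filter.1 hw).2
        obtain ⟨hc, hr, hk, hv⟩ := hTBfacts w hwTB
        have hdig := digsB hb hc hr hv ht (hdvdw w hwTB)
        rw [hlw] at hdig
        refine ⟨hdig.1, hdig.2, ?_⟩
        intro j hj1 hj2
        have hcd := chain_digits hb hc hr hv ht (hdvdw w hwTB)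
          (by rw [hlw]; exact hj1) (by rw [hMall w hwTB]; exact hj2)
        have hch := mpos_chain (w := w) (by rw [hlw]; exact hj1)
          (by rw [hMall w hwTB]; exact hj2)
        exact ⟨hcd.2.2, hch⟩
      have hinj : ∀ w ∈ F, ∀ w' ∈ F, (bits w, kp w) = (bits w', kp w') → w = w' := by
        intro w hw w' hw' he
        have heb : bits w = bits w' := congrArg Prod.fst he
        have hek : kp w = kp w' := congrArg Prod.snd he
        have hek1 : (kp w).1 = (kp w').1 := congrArg Prod.fst hek
        have hek2 : (kp w).2 = (kp w').2 := congrArg Prod.snd hek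
        obtain ⟨hd1, hd2, hdch⟩ := hFdig w hw
        obtain ⟨hd1', hd2', hdch'⟩ := hFdig w' hw'
        have hfst : w.1 = w'.1 := by
          ext i
          by_cases hi : i ∈ Finset.Ico i₀ M
          · rw [Finset.mem_Ico] at hi
            rcases Nat.eq_or_lt_of_le hi.1 with heq | hlt
            · rw [← heq]
              omega
            · have hc1 := (hdch i hlt hi.2).1
              have hc1' := (hdch' i hlt hi.2).1
              by_cases hbit : i ∈ bits w
              · have hbit' : i ∈ bits w' := heb ▸ hbit
                rw [hbitsdef] at hbit hbit'
                have e1 := (Finset.mem_filter.1 hbit).2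
                have e2 := (Finset.mem_filter.1 hbit').2
                omega
              · have hbit' : i ∉ bits w' := fun hh => hbit (heb ▸ hh)
                rw [hbitsdef] at hbit hbit'
                have e1 : ¬ 2 * w.1 i = (b:ℤ) := fun hh =>
                  hbit (Finset.mem_filter.2 ⟨Finset.mem_Ico.2 ⟨by omega, hi.2⟩, hh⟩)
                have e2 : ¬ 2 * w'.1 i = (b:ℤ) := fun hh =>
                  hbit' (Finset.mem_filter.2 ⟨Finset.mem_Ico.2 ⟨by omega, hi.2⟩, hh⟩)
                omega
          · have k1 : keep (fun i => ¬ i ∈ Finset.Ico i₀ M) w.1 i = w.1 i :=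
              keep_apply_pos _ hi
            have k2 : keep (fun i => ¬ i ∈ Finset.Ico i₀ M) w'.1 i = w'.1 i :=
              keep_apply_pos _ hi
            rw [← k1, ← k2]
            exact DFunLike.congr_fun hek1 i
        have hsnd : w.2 = w'.2 := by
          ext i
          by_cases hi : i ∈ Finset.Ico i₀ M
          · rw [Finset.mem_Ico] at hi
            rcases Nat.eq_or_lt_of_le hi.1 with heq | hlt
            · rw [← heq]
              omega
            · have hc2 := (hdch i hlt hi.2).2
              have hc2' := (hdch' i hlt hi.2).2
              have : w.1 i = w'.1 i := by rw [hfst]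
              omega
          · have k1 : keep (fun i => ¬ i ∈ Finset.Ico i₀ M) w.2 i = w.2 i :=
              keep_apply_pos _ hi
            have k2 : keep (fun i => ¬ i ∈ Finset.Ico i₀ M) w'.2 i = w'.2 i :=
              keep_apply_pos _ hi
            rw [← k1, ← k2]
            exact DFunLike.congr_fun hek2 i
        exact Prod.ext hfst hsnd
      have hmem : ∀ w ∈ F, (bits w, kp w) ∈
          (Finset.Ico (i₀+1) M).powerset ×ˢ (F.image kp) := by
        intro w hw
        rw [Finset.mem_product]
        exact ⟨Finset.mem_powerset.2 (Finset.filter_subset _ _), Finset.mem_image_of_mem _ hw⟩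
      have hcard1 := Finset.card_le_card_of_injOn (fun w => (bits w, kp w)) hmem
        (fun w hw w' hw' he => hinj w hw w' hw' he)
      rw [Finset.card_product, Finset.card_powerset, Nat.card_Ico] at hcard1
      have himg : (F.image kp).card ≤ (2*b)^(K - 2*l) := by
        refine IH (K - 2*l) (by omega) (t - (b:ℤ)^M) _ ?_
        intro u hu
        obtain ⟨w, hw, rfl⟩ := Finset.mem_image.1 hu
        have hwTB : w ∈ TB := (Finset.mem_filter.1 hw).1
        have hlw : low w = i₀ := (Finset.mem_filter.1 hw).2
        obtain ⟨hc, hr, hk, hv⟩ := hTBfacts w hwTB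
        refine ⟨⟨cent_keep b hb hc.1 _, cent_keep b hb hc.2 _⟩, reduced_keep hr _, ?_, ?_⟩
        · -- weight
          have hsupp : ∀ (f : ℕ →₀ ℤ), Finset.Ico i₀ M ⊆ f.support →
              (keep (fun i => ¬ i ∈ Finset.Ico i₀ M) f).support.card
                = f.support.card - l := by
            intro f hsub
            have hseq : (keep (fun i => ¬ i ∈ Finset.Ico i₀ M) f).support
                = f.support \ Finset.Ico i₀ M := by
              ext i
              rw [mem_keep_support, Finset.mem_sdiff]
            rw [hseq, Finset.card_sdiff_of_subset hsub, Nat.card_Ico]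
          obtain ⟨hsub1, hsub2⟩ := hIcosub w hwTB
          rw [hlw] at hsub1 hsub2
          unfold wt at hk ⊢
          rw [hkpdef]
          dsimp only
          rw [hsupp w.1 hsub1, hsupp w.2 hsub2]
          have hca1 := Finset.card_le_card hsub1
          have hca2 := Finset.card_le_card hsub2
          rw [Nat.card_Ico] at hca1 hca2
          omega
        · -- value
          have hpv := pval_fpairB hb hc hr hv ht (hdvdw w hwTB)
          rw [hlw, hMall w hwTB] at hpv
          exact hpv
      calc F.card ≤ 2^(M - (i₀+1)) * (F.image kp).card := hcard1
        _ ≤ 2^(l-1) * (2*b)^(K - 2*l) := by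
            apply Nat.mul_le_mul
            · apply Nat.pow_le_pow_right (by omega)
              omega
            · exact himg
        _ ≤ (2*b)^(l-1) * (2*b)^(K - 2*l) := by
            apply Nat.mul_le_mul_right
            apply Nat.pow_le_pow_left
            omega
        _ = (2*b)^((l-1) + (K - 2*l)) := (pow_add _ _ _).symm
        _ = (2*b)^(K - 1 - l) := by congr 1; omega
    calc ∑ i₀ ∈ TB.image low, (TB.filter (fun w => low w = i₀)).card
        ≤ ∑ i₀ ∈ TB.image low, (2*b)^(K - 1 - (M - i₀)) := Finset.sum_le_sum hfbound
      _ = ∑ j ∈ (TB.image low).image (fun i₀ => K - 1 - (M - i₀)), (2*b)^j := by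
          refine (Finset.sum_image ?_).symm
          intro i₀ hi₀ i₀' hi₀' he
          obtain ⟨w, hw, hwe⟩ := Finset.mem_image.1 hi₀
          obtain ⟨w', hw', hwe'⟩ := Finset.mem_image.1 hi₀'
          have h1 : i₀ < M := by rw [← hwe]; exact hlowM w hw
          have h2 : i₀' < M := by rw [← hwe']; exact hlowM w' hw'
          have h3 : 2*(M - i₀) ≤ K := by rw [← hwe]; exact h2lK w hw
          have h4 : 2*(M - i₀') ≤ K := by rw [← hwe']; exact h2lK w' hw'
          dsimp only at he
          omega
      _ ≤ ∑ j ∈ Finset.range (K-1), (2*b)^j := by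
          apply Finset.sum_le_sum_of_subset
          intro j hj
          obtain ⟨i₀, hi₀, hje⟩ := Finset.mem_image.1 hj
          obtain ⟨w, hw, hwe⟩ := Finset.mem_image.1 hi₀
          have h1 : i₀ < M := by rw [← hwe]; exact hlowM w hw
          have h3 : 2*(M - i₀) ≤ K := by rw [← hwe]; exact h2lK w hw
          rw [Finset.mem_range]
          omega
      _ ≤ 2 * (2*b)^(K-1-1) := geom_bound (by omega) (K-1)
      _ = 2 * (2*b)^(K-2) := by
          have hxx : K - 1 - 1 = K - 2 := by omega
          rw [hxx]
  -- assemble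
  have e1 : (2*b)^K = (2*b)^(K-2) * ((2*b) * (2*b)) := by
    have h : (2*b)^K = (2*b)^((K-2)+2) := by congr 1; omega
    rw [h, pow_add, pow_two]
  have e2 : (2*b)^(K-1) = (2*b)^(K-2) * (2*b) := by
    have h : (2*b)^(K-1) = (2*b)^((K-2)+1) := by congr 1; omega
    rw [h, pow_succ]
  have hmain : 4 * (2*b)^(K-1) + (2*b) * (2*b)^(K-2) + 2 * (2*b)^(K-2) ≤ (2*b)^K := by
    rw [e1, e2]
    have hx : 4 * ((2*b)^(K-2) * (2*b)) + (2*b) * (2*b)^(K-2) + 2*(2*b)^(K-2)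
        = (2*b)^(K-2) * (10*b + 2) := by ring
    rw [hx]
    apply Nat.mul_le_mul_left
    nlinarith
  omega

end Count

section Pipeline

variable (b r : ℕ)

lemma exists_dig (hb : 3 ≤ b) {a : ℤ} (h : AtMostCentredDigits b r a) :
    ∃ F : ℕ →₀ ℤ, Cent b F ∧ F.support.card ≤ r ∧ val b F = a := by
  obtain ⟨m, c, hcent, hsum, hcard⟩ := h
  classical
  have hb3 : (3:ℤ) ≤ (b:ℤ) := by exact_mod_cast hb
  refine ⟨⟨(Finset.range m).filter (fun i => c i ≠ 0),
      fun i => if i < m then c i else 0, ?_⟩, ?_, ?_, ?_⟩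
  · intro i
    simp only [Finset.mem_filter, Finset.mem_range]
    constructor
    · rintro ⟨h1, h2⟩
      rw [if_pos h1]
      exact h2
    · intro hne
      by_cases h1 : i < m
      · rw [if_pos h1] at hne
        exact ⟨h1, hne⟩
      · rw [if_neg h1] at hne
        exact absurd rfl hne
  · intro i
    simp only [Finsupp.coe_mk]
    split
    · exact hcent i
    · omega
  · exact hcard
  · unfold val
    simp only [Finsupp.coe_mk]
    rw [hsum]
    have hss : ((Finset.range m).filter (fun i => c i ≠ 0) : Finset ℕ) ⊆ Finset.range m :=
      Finset.filter_subset _ _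
    rw [Finset.sum_subset hss (fun i hi hni => by
      have hci : c i = 0 := by
        by_contra hc0
        exact hni (Finset.mem_filter.2 ⟨hi, hc0⟩)
      rw [if_pos (Finset.mem_range.1 hi), hci]
      ring)]
    refine (Finset.sum_congr rfl fun i hi => ?_).symm
    rw [if_pos (Finset.mem_range.1 hi)]

noncomputable def Dig (a : ℤ) : ℕ →₀ ℤ :=
  if h : 3 ≤ b ∧ AtMostCentredDigits b r a then (exists_dig b r h.1 h.2).choose else 0

lemma Dig_spec (hb : 3 ≤ b) {a : ℤ} (h : AtMostCentredDigits b r a) :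
    Cent b (Dig b r a) ∧ (Dig b r a).support.card ≤ r ∧ val b (Dig b r a) = a := by
  rw [Dig, dif_pos ⟨hb, h⟩]
  exact (exists_dig b r hb h).choose_spec

/-- the set of cancelling sub-pairs for the chosen digit expansions of a pair -/
noncomputable def canSet (p : ℤ × ℤ) : Finset (Finset ℕ × Finset ℕ) :=
  ((Dig b r p.1).support.powerset ×ˢ (Dig b r p.2).support.powerset).filter
    (fun PQ => (∑ i ∈ PQ.1, (Dig b r p.1) i * (b:ℤ)^i)
      + ∑ i ∈ PQ.2, (Dig b r p.2) i * (b:ℤ)^i = 0)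

lemma canSet_nonempty (p : ℤ × ℤ) : (∅, ∅) ∈ canSet b r p := by
  unfold canSet
  refine Finset.mem_filter.2 ⟨Finset.mem_product.2 ⟨?_, ?_⟩, by simp⟩
  · exact Finset.mem_powerset.2 (Finset.empty_subset _)
  · exact Finset.mem_powerset.2 (Finset.empty_subset _)

noncomputable def PQm (p : ℤ × ℤ) : Finset ℕ × Finset ℕ :=
  (Finset.exists_max_image (canSet b r p) (fun PQ => PQ.1.card + PQ.2.card)
    ⟨(∅, ∅), canSet_nonempty b r p⟩).choose

lemma PQm_spec (p : ℤ × ℤ) : PQm b r p ∈ canSet b r p ∧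
    ∀ PQ ∈ canSet b r p, PQ.1.card + PQ.2.card ≤ (PQm b r p).1.card + (PQm b r p).2.card := by
  have h := (Finset.exists_max_image (canSet b r p) (fun PQ => PQ.1.card + PQ.2.card)
    ⟨(∅, ∅), canSet_nonempty b r p⟩).choose_spec
  exact ⟨h.1, h.2⟩

/-- the reduced skeleton of a pair -/
noncomputable def skel (p : ℤ × ℤ) : (ℕ →₀ ℤ) × (ℕ →₀ ℤ) :=
  (keep (fun i => ¬ i ∈ (PQm b r p).1) (Dig b r p.1),
   keep (fun i => ¬ i ∈ (PQm b r p).2) (Dig b r p.2))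

lemma PQm_sub (p : ℤ × ℤ) :
    (PQm b r p).1 ⊆ (Dig b r p.1).support ∧ (PQm b r p).2 ⊆ (Dig b r p.2).support := by
  have h := (PQm_spec b r p).1
  unfold canSet at h
  have h2 := (Finset.mem_filter.1 h).1
  rw [Finset.mem_product] at h2
  exact ⟨Finset.mem_powerset.1 h2.1, Finset.mem_powerset.1 h2.2⟩

lemma PQm_sum (p : ℤ × ℤ) :
    (∑ i ∈ (PQm b r p).1, (Dig b r p.1) i * (b:ℤ)^i)
      + ∑ i ∈ (PQm b r p).2, (Dig b r p.2) i * (b:ℤ)^i = 0 := by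
  have h := (PQm_spec b r p).1
  unfold canSet at h
  exact (Finset.mem_filter.1 h).2

lemma val_keep_split (f : ℕ →₀ ℤ) (s : Finset ℕ) :
    val b (keep (fun i => ¬ i ∈ s) f) = val b f - ∑ i ∈ s, f i * (b:ℤ)^i := by
  have h1 := val_keep_add b f (fun i => i ∈ s)
  have h2 := val_keep_mem b f s
  linarith

lemma skel_cent (hb : 3 ≤ b) (p : ℤ × ℤ) (h1 : AtMostCentredDigits b r p.1)
    (h2 : AtMostCentredDigits b r p.2) : Cent2 b (skel b r p) :=
  ⟨cent_keep b hb (Dig_spec b r hb h1).1 _, cent_keep b hb (Dig_spec b r hb h2).1 _⟩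

lemma skel_wt (hb : 3 ≤ b) (p : ℤ × ℤ) (h1 : AtMostCentredDigits b r p.1)
    (h2 : AtMostCentredDigits b r p.2) : wt (skel b r p) ≤ 2 * r := by
  unfold wt skel
  have e1 := Finset.card_le_card (keep_support_subset
    (p := fun i => ¬ i ∈ (PQm b r p).1) (f := Dig b r p.1))
  have e2 := Finset.card_le_card (keep_support_subset
    (p := fun i => ¬ i ∈ (PQm b r p).2) (f := Dig b r p.2))
  have f1 := (Dig_spec b r hb h1).2.1
  have f2 := (Dig_spec b r hb h2).2.1
  dsimp only
  omega

lemma skel_pval (hb : 3 ≤ b) (p : ℤ × ℤ) (h1 : AtMostCentredDigits b r p.1)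
    (h2 : AtMostCentredDigits b r p.2) : pval b (skel b r p) = p.1 + p.2 := by
  unfold pval skel
  dsimp only
  rw [val_keep_split, val_keep_split, (Dig_spec b r hb h1).2.2, (Dig_spec b r hb h2).2.2]
  have := PQm_sum b r p
  linarith

lemma skel_reduced (p : ℤ × ℤ) : Reduced b (skel b r p) := by
  intro P hP Q hQ hsum
  unfold skel at hP hQ hsum
  -- P avoids (PQm p).1, Q avoids (PQm p).2
  have hP1 : ∀ i ∈ P, i ∈ (Dig b r p.1).support ∧ ¬ i ∈ (PQm b r p).1 :=
    fun i hi => mem_keep_support.1 (hP hi)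
  have hQ1 : ∀ i ∈ Q, i ∈ (Dig b r p.2).support ∧ ¬ i ∈ (PQm b r p).2 :=
    fun i hi => mem_keep_support.1 (hQ hi)
  -- the union is a cancelling pair
  have hdisj1 : Disjoint (PQm b r p).1 P :=
    Finset.disjoint_left.2 (fun i hi hip => (hP1 i hip).2 hi)
  have hdisj2 : Disjoint (PQm b r p).2 Q :=
    Finset.disjoint_left.2 (fun i hi hiq => (hQ1 i hiq).2 hi)
  have hmem : ((PQm b r p).1 ∪ P, (PQm b r p).2 ∪ Q) ∈ canSet b r p := by
    unfold canSet
    refine Finset.mem_filter.2 ⟨Finset.mem_product.2 ⟨?_, ?_⟩, ?_⟩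
    · refine Finset.mem_powerset.2 (Finset.union_subset (PQm_sub b r p).1 ?_)
      exact fun i hi => (hP1 i hi).1
    · refine Finset.mem_powerset.2 (Finset.union_subset (PQm_sub b r p).2 ?_)
      exact fun i hi => (hQ1 i hi).1
    · rw [Finset.sum_union hdisj1, Finset.sum_union hdisj2]
      have hsum1 : ∑ i ∈ P, (Dig b r p.1) i * (b:ℤ)^i
          = ∑ i ∈ P, (keep (fun i => ¬ i ∈ (PQm b r p).1) (Dig b r p.1)) i * (b:ℤ)^i := by
        refine Finset.sum_congr rfl fun i hi => ?_
        rw [keep_apply_pos _ (hP1 i hi).2]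
      have hsum2 : ∑ i ∈ Q, (Dig b r p.2) i * (b:ℤ)^i
          = ∑ i ∈ Q, (keep (fun i => ¬ i ∈ (PQm b r p).2) (Dig b r p.2)) i * (b:ℤ)^i := by
        refine Finset.sum_congr rfl fun i hi => ?_
        rw [keep_apply_pos _ (hQ1 i hi).2]
      have hps := PQm_sum b r p
      unfold psum at hsum
      dsimp only at hsum
      rw [hsum1, hsum2]
      linarith [hsum]
  have hmax := (PQm_spec b r p).2 _ hmem
  dsimp only at hmax
  rw [Finset.card_union_of_disjoint hdisj1, Finset.card_union_of_disjoint hdisj2] at hmax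
  constructor
  · exact Finset.card_eq_zero.1 (by omega)
  · exact Finset.card_eq_zero.1 (by omega)

end Pipeline

section CS
variable {α β γ : Type*} [DecidableEq α] [DecidableEq β] [DecidableEq γ]

lemma sq_sum_le (s : Finset γ) (f : γ → ℕ) :
    (∑ x ∈ s, f x)^2 ≤ s.card * ∑ x ∈ s, (f x)^2 := by
  have h := Finset.sum_mul_sq_le_sq_mul_sq (R := ℕ) s (fun _ => (1:ℕ)) f
  simpa using h

lemma card_filter_eq_sum_sq (P2 : Finset α) (f : α → β) :
    ((P2 ×ˢ P2).filter (fun pq => f pq.1 = f pq.2)).card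
      = ∑ s ∈ P2.image f, ((P2.filter (fun p => f p = s)).card)^2 := by
  rw [Finset.card_eq_sum_card_fiberwise
    (f := fun pq : α × α => f pq.1) (t := P2.image f) (fun pq hpq => by
      have h1 := (Finset.mem_product.1 (Finset.mem_filter.1 hpq).1).1
      exact Finset.mem_image_of_mem _ h1)]
  refine Finset.sum_congr rfl fun s hs => ?_
  have hset : ((P2 ×ˢ P2).filter (fun pq => f pq.1 = f pq.2)).filter
      (fun pq => f pq.1 = s)
      = (P2.filter (fun p => f p = s)) ×ˢ (P2.filter (fun p => f p = s)) := by
    ext pq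
    simp only [Finset.mem_filter, Finset.mem_product]
    constructor
    · rintro ⟨⟨⟨hp1, hp2⟩, heq⟩, hs1⟩
      exact ⟨⟨hp1, hs1⟩, ⟨hp2, heq.symm.trans hs1⟩⟩
    · rintro ⟨⟨hp1, hs1⟩, ⟨hp2, hs2⟩⟩
      exact ⟨⟨⟨hp1, hp2⟩, by rw [hs1, hs2]⟩, hs1⟩
  rw [hset, Finset.card_product, sq]

lemma energy_cs (P2 : Finset α) (f : α → β) (g : α → γ) (N : ℕ)
    (hfg : ∀ p ∈ P2, ∀ q ∈ P2, g p = g q → f p = f q)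
    (hN : ∀ s ∈ P2.image f, ((P2.filter (fun p => f p = s)).image g).card ≤ N) :
    ((P2 ×ˢ P2).filter (fun pq => f pq.1 = f pq.2)).card
      ≤ N * ((P2 ×ˢ P2).filter (fun pq => g pq.1 = g pq.2)).card := by
  rw [card_filter_eq_sum_sq P2 f, card_filter_eq_sum_sq P2 g]
  have key : ∀ s ∈ P2.image f, ((P2.filter (fun p => f p = s)).card)^2
      ≤ N * ∑ σ ∈ (P2.filter (fun p => f p = s)).image g,
          ((P2.filter (fun q => g q = σ)).card)^2 := by
    intro s hs
    set Fs := P2.filter (fun p => f p = s) with hFs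
    have hfib : Fs.card = ∑ σ ∈ Fs.image g, (Fs.filter (fun p => g p = σ)).card :=
      Finset.card_eq_sum_card_fiberwise (fun p hp => Finset.mem_image_of_mem _ hp)
    have hfseq : ∀ σ ∈ Fs.image g,
        Fs.filter (fun p => g p = σ) = P2.filter (fun q => g q = σ) := by
      intro σ hσ
      obtain ⟨p₀, hp₀, hp₀e⟩ := Finset.mem_image.1 hσ
      ext q
      simp only [hFs, Finset.mem_filter]
      constructor
      · rintro ⟨⟨h1, _⟩, h3⟩
        exact ⟨h1, h3⟩
      · rintro ⟨h1, h3⟩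
        refine ⟨⟨h1, ?_⟩, h3⟩
        have hp₀P : p₀ ∈ P2 := (Finset.mem_filter.1 hp₀).1
        have hp₀f : f p₀ = s := (Finset.mem_filter.1 hp₀).2
        rw [← hp₀f]
        exact hfg q h1 p₀ hp₀P (by rw [h3, hp₀e])
    calc Fs.card^2
        = (∑ σ ∈ Fs.image g, (Fs.filter (fun p => g p = σ)).card)^2 := by rw [← hfib]
      _ ≤ (Fs.image g).card * ∑ σ ∈ Fs.image g,
            ((Fs.filter (fun p => g p = σ)).card)^2 := sq_sum_le _ _
      _ ≤ N * ∑ σ ∈ Fs.image g, ((P2.filter (fun q => g q = σ)).card)^2 := by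
          refine Nat.mul_le_mul (hN s hs) ?_
          refine Finset.sum_le_sum fun σ hσ => ?_
          rw [hfseq σ hσ]
  calc ∑ s ∈ P2.image f, ((P2.filter (fun p => f p = s)).card)^2
      ≤ ∑ s ∈ P2.image f, N * ∑ σ ∈ (P2.filter (fun p => f p = s)).image g,
          ((P2.filter (fun q => g q = σ)).card)^2 := Finset.sum_le_sum key
    _ = N * ∑ s ∈ P2.image f, ∑ σ ∈ (P2.filter (fun p => f p = s)).image g,
          ((P2.filter (fun q => g q = σ)).card)^2 := by rw [Finset.mul_sum]
    _ ≤ N * ∑ σ ∈ P2.image g, ((P2.filter (fun q => g q = σ)).card)^2 := by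
        refine Nat.mul_le_mul_left _ ?_
        have hdisj : Set.PairwiseDisjoint ↑(P2.image f)
            (fun s => (P2.filter (fun p => f p = s)).image g) := by
          intro s hs s' hs' hne
          rw [Function.onFun, Finset.disjoint_left]
          intro σ hσ hσ'
          obtain ⟨p, hp, hpe⟩ := Finset.mem_image.1 hσ
          obtain ⟨p', hp', hpe'⟩ := Finset.mem_image.1 hσ'
          have h1 := (Finset.mem_filter.1 hp).1
          have h2 := (Finset.mem_filter.1 hp').1
          have h3 := (Finset.mem_filter.1 hp).2
          have h4 := (Finset.mem_filter.1 hp').2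
          apply hne
          rw [← h3, ← h4]
          exact hfg p h1 p' h2 (by rw [hpe, hpe'])
        rw [← Finset.sum_biUnion hdisj]
        refine Finset.sum_le_sum_of_subset ?_
        intro σ hσ
        rw [Finset.mem_biUnion] at hσ
        obtain ⟨s, hs, hσ2⟩ := hσ
        obtain ⟨p, hp, hpe⟩ := Finset.mem_image.1 hσ2
        exact Finset.mem_image.2 ⟨p, (Finset.mem_filter.1 hp).1, hpe⟩

end CS

section Final

variable (b r : ℕ)

lemma pair_decomp (hb : 3 ≤ b) (p : ℤ × ℤ) (h1 : AtMostCentredDigits b r p.1)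
    (h2 : AtMostCentredDigits b r p.2) :
    p.1 = val b (skel b r p).1 + ∑ i ∈ (PQm b r p).1, (Dig b r p.1) i * (b:ℤ)^i ∧
    p.2 = val b (skel b r p).2 + ∑ i ∈ (PQm b r p).2, (Dig b r p.2) i * (b:ℤ)^i := by
  unfold skel
  dsimp only
  rw [val_keep_split, val_keep_split, (Dig_spec b r hb h1).2.2, (Dig_spec b r hb h2).2.2]
  constructor <;> ring

lemma ediag_bound (hb : 3 ≤ b) (A : Finset ℤ) (hA : ∀ a ∈ A, AtMostCentredDigits b r a) :
    (((A ×ˢ A) ×ˢ (A ×ˢ A)).filter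
        (fun pq => skel b r pq.1 = skel b r pq.2)).card
      ≤ 2^r * 2^r * (A.card^2) := by
  classical
  set P2 := A ×ˢ A with hP2
  set D2 := ((P2 ×ˢ P2).filter (fun pq => skel b r pq.1 = skel b r pq.2)) with hD2
  set Tgt := P2.sigma
    (fun y => ((Dig b r y.1).support.powerset ×ˢ (Dig b r y.2).support.powerset)) with hTgt
  set φ := fun pq : (ℤ×ℤ) × (ℤ×ℤ) =>
    (⟨(pq.1.1, pq.2.2), ((PQm b r pq.1).1, (PQm b r pq.2).2)⟩
      : Σ _ : ℤ × ℤ, Finset ℕ × Finset ℕ) with hφ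
  have hmemA : ∀ pq ∈ D2, pq.1.1 ∈ A ∧ pq.1.2 ∈ A ∧ pq.2.1 ∈ A ∧ pq.2.2 ∈ A := by
    intro pq hpq
    have h := (Finset.mem_filter.1 hpq).1
    rw [Finset.mem_product] at h
    have h1 := h.1
    have h2 := h.2
    rw [hP2, Finset.mem_product] at h1 h2
    exact ⟨h1.1, h1.2, h2.1, h2.2⟩
  have hmem : ∀ pq ∈ D2, φ pq ∈ Tgt := by
    intro pq hpq
    obtain ⟨ha1, ha2, ha3, ha4⟩ := hmemA pq hpq
    rw [hφ, hTgt]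
    rw [Finset.mem_sigma]
    constructor
    · rw [hP2, Finset.mem_product]
      exact ⟨ha1, ha4⟩
    · rw [Finset.mem_product]
      constructor
      · exact Finset.mem_powerset.2 (PQm_sub b r pq.1).1
      · exact Finset.mem_powerset.2 (PQm_sub b r pq.2).2
  have hinj : ∀ pq ∈ D2, ∀ pq' ∈ D2, φ pq = φ pq' → pq = pq' := by
    intro pq hpq pq' hpq' he
    obtain ⟨ha1, ha2, ha3, ha4⟩ := hmemA pq hpq
    obtain ⟨ha1', ha2', ha3', ha4'⟩ := hmemA pq' hpq'
    have hskel : skel b r pq.1 = skel b r pq.2 := (Finset.mem_filter.1 hpq).2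
    have hskel' : skel b r pq'.1 = skel b r pq'.2 := (Finset.mem_filter.1 hpq').2
    rw [hφ] at he
    simp only [Sigma.mk.inj_iff, Prod.mk.injEq] at he
    obtain ⟨⟨h11, h22⟩, hrest⟩ := he
    have hrest' := eq_of_heq hrest
    simp only [Prod.mk.injEq] at hrest'
    obtain ⟨hPeq, hQeq⟩ := hrest'
    -- decompositions
    obtain ⟨d11, d12⟩ := pair_decomp b r hb pq.1 (hA _ ha1) (hA _ ha2)
    obtain ⟨d21, d22⟩ := pair_decomp b r hb pq.2 (hA _ ha3) (hA _ ha4)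
    obtain ⟨d11', d12'⟩ := pair_decomp b r hb pq'.1 (hA _ ha1') (hA _ ha2')
    obtain ⟨d21', d22'⟩ := pair_decomp b r hb pq'.2 (hA _ ha3') (hA _ ha4')
    have z1 := PQm_sum b r pq.1
    have z2 := PQm_sum b r pq.2
    have z1' := PQm_sum b r pq'.1
    have z2' := PQm_sum b r pq'.2
    -- shared quantities
    set S1 := ∑ i ∈ (PQm b r pq.1).1, (Dig b r pq.1.1) i * (b:ℤ)^i with hS1
    set S2 := ∑ i ∈ (PQm b r pq.2).2, (Dig b r pq.2.2) i * (b:ℤ)^i with hS2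
    have hS1' : (∑ i ∈ (PQm b r pq'.1).1, (Dig b r pq'.1.1) i * (b:ℤ)^i) = S1 := by
      rw [← hPeq, ← h11]
    have hS2' : (∑ i ∈ (PQm b r pq'.2).2, (Dig b r pq'.2.2) i * (b:ℤ)^i) = S2 := by
      rw [← hQeq, ← h22]
    have hz1 : (∑ i ∈ (PQm b r pq.1).2, (Dig b r pq.1.2) i * (b:ℤ)^i) = -S1 := by
      linarith [z1]
    have hz1' : (∑ i ∈ (PQm b r pq'.1).2, (Dig b r pq'.1.2) i * (b:ℤ)^i) = -S1 := by
      linarith [z1', hS1']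
    have hz2 : (∑ i ∈ (PQm b r pq.2).1, (Dig b r pq.2.1) i * (b:ℤ)^i) = -S2 := by
      linarith [z2]
    have hz2' : (∑ i ∈ (PQm b r pq'.2).1, (Dig b r pq'.2.1) i * (b:ℤ)^i) = -S2 := by
      linarith [z2', hS2']
    -- skeleton component values
    have hv2 : val b (skel b r pq.1).2 = val b (skel b r pq.2).2 := by rw [hskel]
    have hv1 : val b (skel b r pq.1).1 = val b (skel b r pq.2).1 := by rw [hskel]
    have hv2' : val b (skel b r pq'.1).2 = val b (skel b r pq'.2).2 := by rw [hskel']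
    have hv1' : val b (skel b r pq'.1).1 = val b (skel b r pq'.2).1 := by rw [hskel']
    -- compute
    have e12 : pq.1.2 = pq.2.2 - S2 - S1 := by
      rw [d12, hz1, hv2, d22]
      ring
    have e12' : pq'.1.2 = pq'.2.2 - S2 - S1 := by
      rw [d12', hz1', hv2', d22', hS2']
      ring
    have e21 : pq.2.1 = pq.1.1 - S1 - S2 := by
      rw [d21, hz2, ← hv1, d11]
      ring
    have e21' : pq'.2.1 = pq'.1.1 - S1 - S2 := by
      rw [d21', hz2', ← hv1', d11', hS1']
      ring
    -- conclude
    have q22 : pq.2.2 = pq'.2.2 := h22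
    have q12 : pq.1.2 = pq'.1.2 := by rw [e12, e12', q22]
    have q21 : pq.2.1 = pq'.2.1 := by rw [e21, e21', h11]
    exact Prod.ext (Prod.ext h11 q12) (Prod.ext q21 q22)
  have hcard := Finset.card_le_card_of_injOn φ hmem
    (fun pq hpq pq' hpq' he => hinj pq hpq pq' hpq' he)
  refine hcard.trans ?_
  rw [hTgt, Finset.card_sigma]
  calc ∑ y ∈ P2, ((Dig b r y.1).support.powerset ×ˢ (Dig b r y.2).support.powerset).card
      ≤ ∑ _y ∈ P2, 2^r * 2^r := by
        refine Finset.sum_le_sum fun y hy => ?_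
        rw [hP2, Finset.mem_product] at hy
        rw [Finset.card_product, Finset.card_powerset, Finset.card_powerset]
        exact Nat.mul_le_mul
          (Nat.pow_le_pow_right (by omega) (Dig_spec b r hb (hA _ hy.1)).2.1)
          (Nat.pow_le_pow_right (by omega) (Dig_spec b r hb (hA _ hy.2)).2.1)
    _ = P2.card * (2^r * 2^r) := by rw [Finset.sum_const, smul_eq_mul]
    _ = 2^r * 2^r * (A.card^2) := by
        rw [hP2, Finset.card_product, sq]
        ring

end Final

end

end EnergyAux

theorem energy_of_digital_hamming_ball (b : ℕ) (hb : 3 ≤ b) (r : ℕ)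
    (A : Finset ℤ) (hA : ∀ a ∈ A, AtMostCentredDigits b r a) :
    additiveEnergy A ≤ (2 * b) ^ (4 * r) * A.card ^ 2 := by
  classical
  set P2 := A ×ˢ A with hP2
  have hfg : ∀ p ∈ P2, ∀ q ∈ P2, EnergyAux.skel b r p = EnergyAux.skel b r q →
      (fun p : ℤ × ℤ => p.1 + p.2) p = (fun p : ℤ × ℤ => p.1 + p.2) q := by
    intro p hp q hq he
    rw [hP2, Finset.mem_product] at hp hq
    have h1 := EnergyAux.skel_pval b r hb p (hA _ hp.1) (hA _ hp.2)
    have h2 := EnergyAux.skel_pval b r hb q (hA _ hq.1) (hA _ hq.2)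
    dsimp only
    rw [← h1, ← h2, he]
  have hN : ∀ s ∈ P2.image (fun p : ℤ × ℤ => p.1 + p.2),
      ((P2.filter (fun p => (fun p : ℤ × ℤ => p.1 + p.2) p = s)).image
        (EnergyAux.skel b r)).card ≤ (2*b)^(2*r) := by
    intro s hs
    refine EnergyAux.countD hb (2*r) s _ ?_
    intro u hu
    obtain ⟨p, hp, rfl⟩ := Finset.mem_image.1 hu
    have hpP : p ∈ P2 := (Finset.mem_filter.1 hp).1
    have hps : p.1 + p.2 = s := (Finset.mem_filter.1 hp).2
    rw [hP2, Finset.mem_product] at hpP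
    refine ⟨EnergyAux.skel_cent b r hb p (hA _ hpP.1) (hA _ hpP.2),
      EnergyAux.skel_reduced b r p,
      EnergyAux.skel_wt b r hb p (hA _ hpP.1) (hA _ hpP.2), ?_⟩
    rw [EnergyAux.skel_pval b r hb p (hA _ hpP.1) (hA _ hpP.2)]
    exact hps
  have h1 := EnergyAux.energy_cs P2 (fun p : ℤ × ℤ => p.1 + p.2) (EnergyAux.skel b r)
    ((2*b)^(2*r)) hfg hN
  have h2 := EnergyAux.ediag_bound b r hb A hA
  have hE : additiveEnergy A = ((P2 ×ˢ P2).filter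
      (fun pq => (fun p : ℤ × ℤ => p.1 + p.2) pq.1
        = (fun p : ℤ × ℤ => p.1 + p.2) pq.2)).card := rfl
  rw [hE]
  calc ((P2 ×ˢ P2).filter
      (fun pq => (fun p : ℤ × ℤ => p.1 + p.2) pq.1
        = (fun p : ℤ × ℤ => p.1 + p.2) pq.2)).card
      ≤ (2*b)^(2*r) * ((P2 ×ˢ P2).filter
          (fun pq => EnergyAux.skel b r pq.1 = EnergyAux.skel b r pq.2)).card := h1
    _ ≤ (2*b)^(2*r) * (2^r * 2^r * A.card^2) := Nat.mul_le_mul_left _ h2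
    _ ≤ (2*b)^(4*r) * A.card^2 := by
        have hh : (2*b)^(2*r) * (2^r * 2^r) ≤ (2*b)^(4*r) := by
          have e1 : (2:ℕ)^r * 2^r = 2^(2*r) := by rw [← pow_add]; congr 1; omega
          rw [e1]
          have e2 : (2:ℕ)^(2*r) ≤ (2*b)^(2*r) := Nat.pow_le_pow_left (by omega) _
          calc (2*b)^(2*r) * 2^(2*r) ≤ (2*b)^(2*r) * (2*b)^(2*r) :=
              Nat.mul_le_mul_left _ e2
            _ = (2*b)^(4*r) := by rw [← pow_add]; congr 1; omega
        calc (2*b)^(2*r) * (2^r * 2^r * A.card^2)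
            = ((2*b)^(2*r) * (2^r * 2^r)) * A.card^2 := by ring
          _ ≤ (2*b)^(4*r) * A.card^2 := Nat.mul_le_mul_right _ hh
end
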